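/- arXiv:1507.05266 — 10 statements merged into one kernel-verified Lean document; each statement's English description precedes it below -/
import Mathlib

section
/- Let N, K, M, t, r be positive integers with J = t + r ≤ N, and let S ∈ ℂ^{N×N} be Hermitian positive definite. With E_t the first t columns of I_N, A = [E_t E_r] the first J columns of I_N, P_{C†} the orthogonal projection C†(CC†)⁻¹C for C = [I_M 0_{M×(K−M)}], Z ∈ ℂ^{N×K}, Z_{W1} = S^{-1/2}Z, A₁ = S^{-1/2}A, A₀ = S^{-1/2}E_t, define R̂₁ = K⁻¹(S + S^{1/2} P_{A₁}^⊥ Z_{W1} P_{C†} Z_{W1}† P_{A₁}^⊥ S^{1/2}) and R̂₀ = K⁻¹(S + S^{1/2} P_{A₀}^⊥ Z_{W1} P_{C†} Z_{W1}† P_{A₀}^⊥ S^{1/2}). Then R̂₁ and R̂₀ are Hermitian positive definite (hence invertible), and R̂₁⁻¹ A = K · S⁻¹ A and R̂₀⁻¹ E_t = K · S⁻¹ E_t. -/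
open Matrix
open scoped ComplexOrder

noncomputable section

/-- Orthogonal projector onto the column space of `F`: `P_F = F (Fᴴ F)⁻¹ Fᴴ`. -/
def proj {n m : Type*} [Fintype n] [Fintype m] [DecidableEq n] [DecidableEq m]
    (F : Matrix n m ℂ) : Matrix n n ℂ :=
  F * (Fᴴ * F)⁻¹ * Fᴴ

/-- Complementary projector `P_F^⊥ = I - P_F`. -/
def projPerp {n m : Type*} [Fintype n] [Fintype m] [DecidableEq n] [DecidableEq m]
    (F : Matrix n m ℂ) : Matrix n n ℂ :=
  1 - proj F

lemma my_posDef_smul {n : Type*} [Fintype n] {M : Matrix n n ℂ} (hM : M.PosDef)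
    {c : ℂ} (hc : 0 < c) : (c • M).PosDef := by
  have him : c.im = 0 := by
    have := (Complex.lt_def.mp hc).2; simpa using this.symm
  have hcs : star c = c := by
    rw [Complex.star_def, Complex.conj_eq_iff_im]; exact him
  refine PosDef.of_dotProduct_mulVec_pos ?_ fun x hx => ?_
  · show (c • M)ᴴ = c • M
    rw [conjTranspose_smul, hcs, hM.1]
  · rw [smul_mulVec, dotProduct_smul, smul_eq_mul]
    exact mul_pos hc (hM.dotProduct_mulVec_pos hx)

lemma my_posDef_conjTranspose_mul_self {m n : Type*} [Fintype m] [Fintype n]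
    (F : Matrix m n ℂ) (hF : Function.Injective F.mulVec) : (Fᴴ * F).PosDef := by
  refine PosDef.of_dotProduct_mulVec_pos (isHermitian_conjTranspose_mul_self _) fun x hx => ?_
  rw [← mulVec_mulVec, dotProduct_mulVec, vecMul_conjTranspose, star_star]
  rw [dotProduct_star_self_pos_iff]
  intro h
  exact hx (hF (by simpa using h))

lemma my_embed_inj (N m : ℕ) (h : m ≤ N) :
    Function.Injective (Matrix.of fun (i : Fin N) (j : Fin m) =>
      if (i : ℕ) = (j : ℕ) then (1 : ℂ) else 0).mulVec := by
  intro v w hvw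
  funext j
  have hj : (j : ℕ) < N := lt_of_lt_of_le j.2 h
  have key : ∀ u : Fin m → ℂ,
      ((Matrix.of fun (i : Fin N) (j : Fin m) =>
        if (i : ℕ) = (j : ℕ) then (1 : ℂ) else 0).mulVec u) ⟨j, hj⟩ = u j := by
    intro u
    simp only [mulVec, dotProduct, Matrix.of_apply, ite_mul, one_mul, zero_mul]
    simp_rw [Fin.val_inj]
    simp
  rw [← key v, ← key w, hvw]

lemma key_lemma (N K M₀ m : ℕ) (hK : 0 < K)
    (S : Matrix (Fin N) (Fin N) ℂ) (hS : S.PosDef)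
    (Shalf : Matrix (Fin N) (Fin N) ℂ)
    (hsq : Shalf * Shalf = S) (hherm : Shalfᴴ = Shalf)
    (E : Matrix (Fin N) (Fin m) ℂ) (hE : Function.Injective E.mulVec)
    (Z : Matrix (Fin N) (Fin K) ℂ)
    (PC : Matrix (Fin K) (Fin K) ℂ) (G : Matrix (Fin K) (Fin M₀) ℂ)
    (hPC : PC = G * Gᴴ)
    (ZW1 : Matrix (Fin N) (Fin K) ℂ) (hZW1 : ZW1 = Shalf⁻¹ * Z)
    (E1 : Matrix (Fin N) (Fin m) ℂ) (hE1d : E1 = Shalf⁻¹ * E)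
    (R : Matrix (Fin N) (Fin N) ℂ)
    (hR : R = ((K : ℂ))⁻¹ • (S + Shalf * projPerp E1 * ZW1 * PC * ZW1ᴴ * projPerp E1 * Shalf)) :
    R.PosDef ∧ R⁻¹ * E = (K : ℂ) • (S⁻¹ * E) := by
  have hdetS : IsUnit S.det := (isUnit_iff_isUnit_det S).mp hS.isUnit
  have hdetSh : IsUnit Shalf.det := by
    have : Shalf.det * Shalf.det = S.det := by rw [← det_mul, hsq]
    exact isUnit_of_mul_isUnit_left (this ▸ hdetS)
  have hShu : IsUnit Shalf := (isUnit_iff_isUnit_det Shalf).mpr hdetSh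
  have hSinv : S⁻¹ = Shalf⁻¹ * Shalf⁻¹ := by rw [← hsq, Matrix.mul_inv_rev]
  have hShS : Shalf * S⁻¹ = Shalf⁻¹ := by
    rw [hSinv, ← Matrix.mul_assoc, Matrix.mul_nonsing_inv _ hdetSh, Matrix.one_mul]
  -- E1 has injective mulVec
  have hE1 : Function.Injective E1.mulVec := by
    rw [hE1d]
    intro v w hvw
    apply hE
    apply (Matrix.mulVec_injective_iff_isUnit.mpr (Matrix.isUnit_nonsing_inv_iff.mpr hShu))
    simpa only [← mulVec_mulVec] using hvw
  have hEEpd : (E1ᴴ * E1).PosDef := my_posDef_conjTranspose_mul_self E1 hE1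
  have hEEdet : IsUnit (E1ᴴ * E1).det := (isUnit_iff_isUnit_det _).mp hEEpd.isUnit
  have hp : proj E1 * E1 = E1 := by
    rw [proj, Matrix.mul_assoc, Matrix.mul_assoc, Matrix.nonsing_inv_mul _ hEEdet,
      Matrix.mul_one]
  have hperp : projPerp E1 * E1 = 0 := by
    rw [projPerp, Matrix.sub_mul, Matrix.one_mul, hp, sub_self]
  have hperpH : (projPerp E1)ᴴ = projPerp E1 := by
    rw [projPerp, conjTranspose_sub, conjTranspose_one, proj, conjTranspose_mul,
      conjTranspose_mul, conjTranspose_conjTranspose, Matrix.conjTranspose_nonsing_inv,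
      (isHermitian_conjTranspose_mul_self E1).eq, Matrix.mul_assoc]
  -- positive definiteness
  set X : Matrix (Fin N) (Fin M₀) ℂ := Shalf * projPerp E1 * ZW1 * G with hX
  have hT : Shalf * projPerp E1 * ZW1 * PC * ZW1ᴴ * projPerp E1 * Shalf = X * Xᴴ := by
    rw [hPC, hX]
    simp only [conjTranspose_mul, hperpH, hherm, Matrix.mul_assoc]
  have hRpd : R.PosDef := by
    rw [hR]
    have h1 : (S + Shalf * projPerp E1 * ZW1 * PC * ZW1ᴴ * projPerp E1 * Shalf).PosDef := by
      rw [hT]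
      exact hS.add_posSemidef (posSemidef_self_mul_conjTranspose X)
    refine my_posDef_smul h1 ?_
    have h2 : ((K : ℂ))⁻¹ = ((((K : ℝ)⁻¹ : ℝ)) : ℂ) := by push_cast; ring
    rw [h2, Complex.zero_lt_real]
    positivity
  refine ⟨hRpd, ?_⟩
  have hKne : (K : ℂ) ≠ 0 := Nat.cast_ne_zero.mpr hK.ne'
  have hRE : R * ((K : ℂ) • (S⁻¹ * E)) = E := by
    rw [hR, Matrix.smul_mul, Matrix.mul_smul, smul_smul, inv_mul_cancel₀ hKne, one_smul,
      Matrix.add_mul]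
    have h2 : S * (S⁻¹ * E) = E := by
      rw [← Matrix.mul_assoc, Matrix.mul_nonsing_inv _ hdetS, Matrix.one_mul]
    have h3 : Shalf * projPerp E1 * ZW1 * PC * ZW1ᴴ * projPerp E1 * Shalf * (S⁻¹ * E) = 0 := by
      have : Shalf * (S⁻¹ * E) = E1 := by rw [← Matrix.mul_assoc, hShS, ← hE1d]
      rw [Matrix.mul_assoc _ Shalf, this, Matrix.mul_assoc _ (projPerp E1), hperp,
        Matrix.mul_zero]
    rw [h2, h3, add_zero]
  have hdetR : IsUnit R.det := (isUnit_iff_isUnit_det R).mp hRpd.isUnit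
  conv_lhs => rw [← hRE]
  rw [← Matrix.mul_assoc, Matrix.nonsing_inv_mul _ hdetR, Matrix.one_mul]

lemma my_shalf {N : ℕ} (S : Matrix (Fin N) (Fin N) ℂ) (hS : S.PosDef) :
    let Shalf : Matrix (Fin N) (Fin N) ℂ :=
      (hS.posSemidef.1.eigenvectorUnitary : Matrix (Fin N) (Fin N) ℂ) *
        diagonal ((↑) ∘ Real.sqrt ∘ hS.posSemidef.1.eigenvalues) *
        (star hS.posSemidef.1.eigenvectorUnitary : Matrix (Fin N) (Fin N) ℂ)
    Shalf * Shalf = S ∧ Shalfᴴ = Shalf := by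
  intro Shalf
  have hU : (star hS.posSemidef.1.eigenvectorUnitary : Matrix (Fin N) (Fin N) ℂ) *
      (hS.posSemidef.1.eigenvectorUnitary : Matrix (Fin N) (Fin N) ℂ) = 1 :=
    Unitary.coe_star_mul_self _
  have hd : diagonal (((↑) ∘ Real.sqrt ∘ hS.posSemidef.1.eigenvalues) : Fin N → ℂ) *
      diagonal ((↑) ∘ Real.sqrt ∘ hS.posSemidef.1.eigenvalues) =
      diagonal (RCLike.ofReal ∘ hS.posSemidef.1.eigenvalues) := by
    rw [diagonal_mul_diagonal]
    congr 1
    funext i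
    simp only [Function.comp_apply]
    rw [← Complex.ofReal_mul, Real.mul_self_sqrt (hS.posSemidef.eigenvalues_nonneg i)]
    rfl
  constructor
  · calc Shalf * Shalf = (hS.posSemidef.1.eigenvectorUnitary : Matrix (Fin N) (Fin N) ℂ) *
          (diagonal ((↑) ∘ Real.sqrt ∘ hS.posSemidef.1.eigenvalues) *
          ((star hS.posSemidef.1.eigenvectorUnitary : Matrix (Fin N) (Fin N) ℂ) *
          (hS.posSemidef.1.eigenvectorUnitary : Matrix (Fin N) (Fin N) ℂ)) *
          diagonal ((↑) ∘ Real.sqrt ∘ hS.posSemidef.1.eigenvalues)) *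
          (star hS.posSemidef.1.eigenvectorUnitary : Matrix (Fin N) (Fin N) ℂ) := by
            simp only [Shalf, Matrix.mul_assoc]
      _ = S := by
            rw [hU, Matrix.mul_one, hd]
            conv_rhs => rw [hS.posSemidef.1.spectral_theorem, Unitary.conjStarAlgAut_apply]
  · simp only [Shalf, conjTranspose_mul, diagonal_conjTranspose, Matrix.mul_assoc]
    have : star (((↑) ∘ Real.sqrt ∘ hS.posSemidef.1.eigenvalues) : Fin N → ℂ) =
        (↑) ∘ Real.sqrt ∘ hS.posSemidef.1.eigenvalues := by
      funext i; simp
    rw [this]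
    simp [Matrix.star_eq_conjTranspose, Matrix.mul_assoc]

/-- Lemma 1 of the paper: the ML covariance estimates `R̂₁`, `R̂₀` are Hermitian positive
definite and satisfy `R̂₁⁻¹ A = K S⁻¹ A` and `R̂₀⁻¹ E_t = K S⁻¹ E_t`. -/
theorem ml_covariance_estimates_properties
    (N K M t r : ℕ) (hN : 0 < N) (hK : 0 < K) (hM : 0 < M) (ht : 0 < t) (hr : 0 < r)
    (hJ : t + r ≤ N) (hMK : M ≤ K)
    (S : Matrix (Fin N) (Fin N) ℂ) (hS : S.PosDef)
    (Z : Matrix (Fin N) (Fin K) ℂ) :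
    -- `E_t` : first `t` columns of the identity `I_N`
    let Et : Matrix (Fin N) (Fin t) ℂ := Matrix.of fun i j => if (i : ℕ) = (j : ℕ) then 1 else 0
    -- `A = [E_t E_r]` : first `t + r` columns of the identity `I_N`
    let A : Matrix (Fin N) (Fin (t + r)) ℂ :=
      Matrix.of fun i j => if (i : ℕ) = (j : ℕ) then 1 else 0
    -- `C = [I_M 0]`
    let C : Matrix (Fin M) (Fin K) ℂ := Matrix.of fun i j => if (i : ℕ) = (j : ℕ) then 1 else 0
    let PC : Matrix (Fin K) (Fin K) ℂ := Cᴴ * (C * Cᴴ)⁻¹ * C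
    let Shalf : Matrix (Fin N) (Fin N) ℂ :=
      (hS.posSemidef.1.eigenvectorUnitary : Matrix (Fin N) (Fin N) ℂ) *
        diagonal ((↑) ∘ Real.sqrt ∘ hS.posSemidef.1.eigenvalues) *
        (star hS.posSemidef.1.eigenvectorUnitary : Matrix (Fin N) (Fin N) ℂ)
    let ZW1 : Matrix (Fin N) (Fin K) ℂ := Shalf⁻¹ * Z
    let A1 : Matrix (Fin N) (Fin (t + r)) ℂ := Shalf⁻¹ * A
    let A0 : Matrix (Fin N) (Fin t) ℂ := Shalf⁻¹ * Et
    let R1 : Matrix (Fin N) (Fin N) ℂ :=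
      ((K : ℂ))⁻¹ • (S + Shalf * projPerp A1 * ZW1 * PC * ZW1ᴴ * projPerp A1 * Shalf)
    let R0 : Matrix (Fin N) (Fin N) ℂ :=
      ((K : ℂ))⁻¹ • (S + Shalf * projPerp A0 * ZW1 * PC * ZW1ᴴ * projPerp A0 * Shalf)
    R1.PosDef ∧ R0.PosDef ∧
      R1⁻¹ * A = (K : ℂ) • (S⁻¹ * A) ∧ R0⁻¹ * Et = (K : ℂ) • (S⁻¹ * Et) := by
  intro Et A C PC Shalf ZW1 A1 A0 R1 R0
  have hCC : C * Cᴴ = 1 := by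
    ext i j
    have hi : (i : ℕ) < K := lt_of_lt_of_le i.2 hMK
    rw [mul_apply, Finset.sum_eq_single (⟨(i : ℕ), hi⟩ : Fin K)]
    · simp [C, conjTranspose_apply, Matrix.one_apply, Fin.ext_iff, eq_comm,
        apply_ite (starRingEnd ℂ)]
    · intro k _ hk
      have hik : (i : ℕ) ≠ (k : ℕ) := fun hik => hk (by simp [Fin.ext_iff, ← hik])
      simp [C, conjTranspose_apply, hik]
    · intro h; exact absurd (Finset.mem_univ _) h
  have hPCd : PC = Cᴴ * (Cᴴ)ᴴ := by
    show Cᴴ * (C * Cᴴ)⁻¹ * C = _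
    rw [hCC, inv_one, Matrix.mul_one, conjTranspose_conjTranspose]
  have h1 := key_lemma N K M (t + r) hK S hS Shalf (my_shalf S hS).1
    (my_shalf S hS).2 A (my_embed_inj N (t + r) hJ) Z PC Cᴴ hPCd
    ZW1 rfl A1 rfl R1 rfl
  have h0 := key_lemma N K M t hK S hS Shalf (my_shalf S hS).1
    (my_shalf S hS).2 Et
    (my_embed_inj N t (le_trans (Nat.le_add_right t r) hJ)) Z PC Cᴴ hPCd
    ZW1 rfl A0 rfl R0 rfl
  exact ⟨h1.1, h0.1, h1.2, h0.2⟩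
end
end

section
/- Let R ∈ ℂ^{N×N} be Hermitian positive definite, let E_t ∈ ℂ^{N×t} and E_r ∈ ℂ^{N×r} have full column rank, and suppose A = [E_t E_r] ∈ ℂ^{N×(t+r)} has full column rank. Let Γ = (A† R⁻¹ A)⁻¹ be partitioned into 2×2 blocks conformally with (t, r), with Γ₂₂ its lower-right r×r block. Set Ā₁ = R^{-1/2}A and Ā₀ = R^{-1/2}E_t. Then P_{Ā₀}^⊥ · R^{-1/2} E_r Γ₂₂ E_r† R^{-1/2} · P_{Ā₀}^⊥ = P_{Ā₁} − P_{Ā₀}. -/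
open Matrix
open scoped ComplexOrder

noncomputable section

lemma aux_mulVec_eq_zero {n m : Type*} [Fintype n] [Fintype m]
    (B : Matrix n m ℂ) (h : B.rank = Fintype.card m) {x : m → ℂ}
    (hx : B *ᵥ x = 0) : x = 0 := by
  have h1 := LinearMap.finrank_range_add_finrank_ker B.mulVecLin
  rw [Module.finrank_fintype_fun_eq_card] at h1
  rw [Matrix.rank] at h
  have hker : LinearMap.ker B.mulVecLin = ⊥ := Submodule.finrank_eq_zero.mp (by omega)
  have hx' : x ∈ LinearMap.ker B.mulVecLin := by
    simpa [Matrix.mulVecLin_apply] using hx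
  simpa [hker] using hx'

lemma aux_posDef {n m : Type*} [Fintype n] [Fintype m]
    (B : Matrix n m ℂ) (h : B.rank = Fintype.card m) : (Bᴴ * B).PosDef := by
  refine PosDef.of_dotProduct_mulVec_pos (isHermitian_conjTranspose_mul_self B) fun x hx => ?_
  have hBx : B *ᵥ x ≠ 0 := fun h0 => hx (aux_mulVec_eq_zero B h h0)
  have : dotProduct (star x) ((Bᴴ * B) *ᵥ x) = dotProduct (star (B *ᵥ x)) (B *ᵥ x) := by
    rw [← mulVec_mulVec, dotProduct_mulVec, star_mulVec]
  rw [this]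
  exact (dotProduct_star_self_pos_iff).mpr hBx

set_option maxHeartbeats 1000000 in
/-- Eqs. (R2)/(W1) of the paper:
`P_{Ā₀}^⊥ R^{-1/2} E_r Γ₂₂ E_rᴴ R^{-1/2} P_{Ā₀}^⊥ = P_{Ā₁} − P_{Ā₀}`. -/
theorem projector_difference_identity
    {n : Type*} [Fintype n] [DecidableEq n] (t r : ℕ) (ht : 0 < t) (hr : 0 < r)
    (R : Matrix n n ℂ) (hR : R.PosDef)
    (Et : Matrix n (Fin t) ℂ) (Er : Matrix n (Fin r) ℂ)
    (hEt : Et.rank = t) (hEr : Er.rank = r)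
    (hA : (fromCols Et Er).rank = t + r) :
    let A : Matrix n (Fin t ⊕ Fin r) ℂ := fromCols Et Er
    let Γ : Matrix (Fin t ⊕ Fin r) (Fin t ⊕ Fin r) ℂ := (Aᴴ * R⁻¹ * A)⁻¹
    let Γ22 : Matrix (Fin r) (Fin r) ℂ := Γ.toBlocks₂₂
    let Rhalf : Matrix n n ℂ := hR.posSemidef.1.eigenvectorUnitary.1 *
      diagonal (((↑) : ℝ → ℂ) ∘ Real.sqrt ∘ hR.posSemidef.1.eigenvalues) *
      (star hR.posSemidef.1.eigenvectorUnitary : Matrix n n ℂ)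
    let Abar1 : Matrix n (Fin t ⊕ Fin r) ℂ := Rhalf⁻¹ * A
    let Abar0 : Matrix n (Fin t) ℂ := Rhalf⁻¹ * Et
    projPerp Abar0 * (Rhalf⁻¹ * Er * Γ22 * Erᴴ * Rhalf⁻¹) * projPerp Abar0 =
      proj Abar1 - proj Abar0 := by
  intro A Γ Γ22 Rhalf Abar1 Abar0
  -- basic facts about Rhalf
  have hS : Rhalf.IsHermitian := by
    show (_ * _ * _)ᴴ = _
    simp only [Rhalf, conjTranspose_mul, diagonal_conjTranspose,
      star_eq_conjTranspose, conjTranspose_conjTranspose, Matrix.mul_assoc]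
    congr 3
    funext i
    simp [Complex.conj_ofReal]
  have hSH : Rhalfᴴ = Rhalf := hS
  have hSS : Rhalf * Rhalf = R := by
    have hU : (star hR.posSemidef.1.eigenvectorUnitary : Matrix n n ℂ) *
        hR.posSemidef.1.eigenvectorUnitary.1 = 1 := Unitary.coe_star_mul_self _
    have hD : diagonal (((↑) : ℝ → ℂ) ∘ Real.sqrt ∘ hR.posSemidef.1.eigenvalues) *
        diagonal (((↑) : ℝ → ℂ) ∘ Real.sqrt ∘ hR.posSemidef.1.eigenvalues) =
        diagonal (RCLike.ofReal ∘ hR.posSemidef.1.eigenvalues) := by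
      rw [diagonal_mul_diagonal]
      congr 1; funext i
      simp only [Function.comp_apply, ← Complex.ofReal_mul]
      rw [Real.mul_self_sqrt (hR.eigenvalues_pos i).le]; rfl
    conv_rhs => rw [hR.posSemidef.1.spectral_theorem, Unitary.conjStarAlgAut_apply]
    show _ * _ * _ * (_ * _ * _) = _
    simp only [Matrix.mul_assoc]
    rw [← Matrix.mul_assoc (star _ : Matrix n n ℂ) _, hU, Matrix.one_mul,
      ← Matrix.mul_assoc (diagonal _) (diagonal _), hD]
  have hdetR : R.det ≠ 0 := hR.det_pos.ne'
  have hdetS : IsUnit Rhalf.det := by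
    refine isUnit_iff_ne_zero.mpr fun h0 => hdetR ?_
    rw [← hSS, det_mul, h0, mul_zero]
  have hdetSi : IsUnit (Rhalf⁻¹).det := Rhalf.isUnit_nonsing_inv_det hdetS
  have hSiH : (Rhalf⁻¹)ᴴ = Rhalf⁻¹ := by
    rw [conjTranspose_nonsing_inv, hSH]
  -- notation
  set B0 : Matrix n (Fin t) ℂ := Rhalf⁻¹ * Et with hB0
  set B1 : Matrix n (Fin r) ℂ := Rhalf⁻¹ * Er with hB1
  set a : Matrix (Fin t) (Fin t) ℂ := B0ᴴ * B0 with ha_def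
  set b : Matrix (Fin t) (Fin r) ℂ := B0ᴴ * B1 with hb_def
  set d : Matrix (Fin r) (Fin r) ℂ := B1ᴴ * B1 with hd_def
  set s : Matrix (Fin r) (Fin r) ℂ := d - bᴴ * a⁻¹ * b with hs_def
  -- ranks
  have hrB0 : B0.rank = Fintype.card (Fin t) := by
    rw [hB0, rank_mul_eq_right_of_isUnit_det Rhalf⁻¹ Et hdetSi, hEt, Fintype.card_fin]
  have hrA1 : Abar1.rank = Fintype.card (Fin t ⊕ Fin r) := by
    show (Rhalf⁻¹ * A).rank = _
    rw [rank_mul_eq_right_of_isUnit_det Rhalf⁻¹ A hdetSi]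
    simpa using hA
  have ha : a.PosDef := aux_posDef B0 hrB0
  have hM : (Abar1ᴴ * Abar1).PosDef := aux_posDef Abar1 hrA1
  -- block structure
  have hA1c : Abar1 = fromCols B0 B1 := by
    show Rhalf⁻¹ * fromCols Et Er = _
    rw [mul_fromCols]
  have hbH : bᴴ = B1ᴴ * B0 := by
    rw [hb_def, conjTranspose_mul, conjTranspose_conjTranspose]
  have hMb : Abar1ᴴ * Abar1 = fromBlocks a b bᴴ d := by
    rw [hA1c, conjTranspose_fromCols_eq_fromRows_conjTranspose,
      fromRows_mul_fromCols, hbH]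
  -- a is invertible
  haveI : Invertible a := a.invertibleOfIsUnitDet (isUnit_iff_ne_zero.mpr ha.det_pos.ne')
  have haa : a * a⁻¹ = 1 := a.mul_nonsing_inv (isUnit_iff_ne_zero.mpr ha.det_pos.ne')
  have haa' : a⁻¹ * a = 1 := a.nonsing_inv_mul (isUnit_iff_ne_zero.mpr ha.det_pos.ne')
  -- s is positive definite
  have hs : s.PosDef := by
    refine PosDef.of_dotProduct_mulVec_pos ?_ ?_
    · show sᴴ = s
      rw [hs_def]
      simp only [conjTranspose_sub, conjTranspose_mul, conjTranspose_conjTranspose,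
        conjTranspose_nonsing_inv, ha.1.eq]
      rw [hd_def]
      simp only [conjTranspose_mul, conjTranspose_conjTranspose, Matrix.mul_assoc]
    · intro x hx
      have hne : (-((a⁻¹ * b) *ᵥ x) ⊕ᵥ x) ≠ 0 := by
        intro h0
        exact hx (funext fun i => congrFun h0 (Sum.inr i))
      have h2 := hM.dotProduct_mulVec_pos hne
      rw [hMb, dotProduct_mulVec, schur_complement_eq₁₁ b d _ _ ha.1, neg_add_cancel,
        star_zero, zero_vecMul, zero_dotProduct, zero_add] at h2
      rwa [dotProduct_mulVec]
  have hss : s * s⁻¹ = 1 := s.mul_nonsing_inv (isUnit_iff_ne_zero.mpr hs.det_pos.ne')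
  have hss' : s⁻¹ * s = 1 := s.nonsing_inv_mul (isUnit_iff_ne_zero.mpr hs.det_pos.ne')
  -- the explicit block inverse
  set N : Matrix (Fin t ⊕ Fin r) (Fin t ⊕ Fin r) ℂ :=
    fromBlocks (a⁻¹ + a⁻¹ * b * s⁻¹ * bᴴ * a⁻¹) (-(a⁻¹ * b * s⁻¹))
      (-(s⁻¹ * bᴴ * a⁻¹)) s⁻¹ with hN_def
  have hd_eq : d = s + bᴴ * a⁻¹ * b := by rw [hs_def]; abel
  have e11 : a * (a⁻¹ + a⁻¹ * b * s⁻¹ * bᴴ * a⁻¹) + b * -(s⁻¹ * bᴴ * a⁻¹) = 1 := by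
    simp only [Matrix.mul_add, Matrix.mul_neg, ← Matrix.mul_assoc, haa, Matrix.one_mul]
    abel
  have e12 : a * -(a⁻¹ * b * s⁻¹) + b * s⁻¹ = 0 := by
    simp only [Matrix.mul_neg, ← Matrix.mul_assoc, haa, Matrix.one_mul]
    abel
  have e21 : bᴴ * (a⁻¹ + a⁻¹ * b * s⁻¹ * bᴴ * a⁻¹) + d * -(s⁻¹ * bᴴ * a⁻¹) = 0 := by
    rw [hd_eq]
    simp only [Matrix.mul_add, Matrix.add_mul, Matrix.mul_neg, ← Matrix.mul_assoc, hss,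
      Matrix.one_mul]
    abel
  have e22 : bᴴ * -(a⁻¹ * b * s⁻¹) + d * s⁻¹ = 1 := by
    rw [hd_eq]
    simp only [Matrix.mul_neg, Matrix.add_mul, ← Matrix.mul_assoc, hss, Matrix.one_mul]
    abel
  have hMN : fromBlocks a b bᴴ d * N = 1 := by
    rw [hN_def, fromBlocks_multiply, e11, e12, e21, e22, fromBlocks_one]
  -- identify Γ
  have hAR : Aᴴ * R⁻¹ * A = fromBlocks a b bᴴ d := by
    rw [← hMb]
    show Aᴴ * R⁻¹ * A = (Rhalf⁻¹ * A)ᴴ * (Rhalf⁻¹ * A)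
    rw [← hSS, Matrix.mul_inv_rev]
    simp only [conjTranspose_mul, hSiH, Matrix.mul_assoc]
  have hΓ : Γ = N := by
    show (Aᴴ * R⁻¹ * A)⁻¹ = N
    rw [hAR, inv_eq_right_inv hMN]
  have hΓ22 : Γ22 = s⁻¹ := by
    show Γ.toBlocks₂₂ = s⁻¹
    rw [hΓ, hN_def, toBlocks_fromBlocks₂₂]
  -- compute proj Abar1
  have hproj1 : proj Abar1 =
      (B0 * (a⁻¹ + a⁻¹ * b * s⁻¹ * bᴴ * a⁻¹) + B1 * (-(s⁻¹ * bᴴ * a⁻¹))) * B0ᴴ +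
        (B0 * (-(a⁻¹ * b * s⁻¹)) + B1 * s⁻¹) * B1ᴴ := by
    rw [proj, hMb, inv_eq_right_inv hMN, hA1c,
      conjTranspose_fromCols_eq_fromRows_conjTranspose, hN_def,
      fromCols_mul_fromBlocks, fromCols_mul_fromRows]
  have hproj0 : proj Abar0 = B0 * a⁻¹ * B0ᴴ := rfl
  -- rewrite the middle factor
  have hB1H : B1ᴴ = Erᴴ * Rhalf⁻¹ := by rw [hB1, conjTranspose_mul, hSiH]
  have hmid : Rhalf⁻¹ * Er * Γ22 * Erᴴ * Rhalf⁻¹ = B1 * s⁻¹ * B1ᴴ := by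
    rw [hΓ22, hB1H, hB1]
    simp only [Matrix.mul_assoc]
  rw [projPerp, hmid, hproj1, hproj0, hbH, hb_def]
  simp only [Matrix.mul_add, Matrix.add_mul, Matrix.mul_neg, Matrix.neg_mul, Matrix.sub_mul,
    Matrix.mul_sub, Matrix.one_mul, Matrix.mul_one, Matrix.mul_assoc]
  abel
end
end

section
/- In the I-GMANOVA setup, let R̂₁ = K⁻¹(S_c + S_c^{1/2} P_{A₁}^⊥ Z_{W1} P_{C†} Z_{W1}† P_{A₁}^⊥ S_c^{1/2}) (which is Hermitian positive definite), let Γ̂¹ = (A† R̂₁⁻¹ A)⁻¹ be partitioned into 2×2 blocks conformally with (t, r), and let Γ̂₂₂¹ be its lower-right r×r block. Then K · P_{A₀}^⊥ S_c^{-1/2} E_r Γ̂₂₂¹ E_r† S_c^{-1/2} P_{A₀}^⊥ = P_{A₁} − P_{A₀}; consequently the Wald statistic Tr[Z_{W1}† (K P_{A₀}^⊥ S_c^{-1/2} E_r Γ̂₂₂¹ E_r† S_c^{-1/2} P_{A₀}^⊥) Z_{W1} P_{C†}] equals the two-step GLR statistic Tr[Z_{W1}† (P_{A₁} − P_{A₀})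 Z_{W1} P_{C†}] (statistical equivalence of the Wald test and the 2S-GLRT). -/
open Matrix
open scoped ComplexOrder

noncomputable section

/-- The old Mathlib `Matrix.PosSemidef.sqrt` (removed), with its original definition. -/
def posSemidefSqrt {n 𝕜 : Type*} [Fintype n] [DecidableEq n] [RCLike 𝕜] {A : Matrix n n 𝕜}
    (hA : A.PosSemidef) : Matrix n n 𝕜 :=
  hA.1.eigenvectorUnitary.1 * diagonal ((↑) ∘ (√·) ∘ hA.1.eigenvalues) *
    (star hA.1.eigenvectorUnitary : Matrix n n 𝕜)

set_option linter.unusedSectionVars false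
set_option linter.unusedTactic false
set_option maxHeartbeats 1600000

variable {l m n p q : Type*} [Fintype l] [Fintype m] [Fintype n] [Fintype p] [Fintype q]
  [DecidableEq l] [DecidableEq m] [DecidableEq n] [DecidableEq p] [DecidableEq q]

lemma posSemidefSqrt_mul_self {A : Matrix n n ℂ} (hA : A.PosSemidef) :
    posSemidefSqrt hA * posSemidefSqrt hA = A := by
  conv_rhs => rw [hA.1.spectral_theorem]
  have hU : (star hA.1.eigenvectorUnitary : Matrix n n ℂ) * hA.1.eigenvectorUnitary.1 = 1 :=
    Unitary.coe_star_mul_self _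
  have hD : diagonal (((↑) ∘ (√·) ∘ hA.1.eigenvalues : n → ℂ)) *
      diagonal ((↑) ∘ (√·) ∘ hA.1.eigenvalues) = diagonal (RCLike.ofReal ∘ hA.1.eigenvalues) := by
    rw [diagonal_mul_diagonal]
    congr 1
    funext i
    simp only [Function.comp_apply]
    rw [← Complex.ofReal_mul, Real.mul_self_sqrt (hA.eigenvalues_nonneg i)]
    rfl
  unfold posSemidefSqrt
  rw [Unitary.conjStarAlgAut_apply]
  calc _ = hA.1.eigenvectorUnitary.1 * diagonal ((↑) ∘ (√·) ∘ hA.1.eigenvalues) *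
        ((star hA.1.eigenvectorUnitary : Matrix n n ℂ) * hA.1.eigenvectorUnitary.1) *
        diagonal ((↑) ∘ (√·) ∘ hA.1.eigenvalues) *
        (star hA.1.eigenvectorUnitary : Matrix n n ℂ) := by simp only [Matrix.mul_assoc]; rfl
    _ = _ := by rw [hU, Matrix.mul_one, Matrix.mul_assoc _ (diagonal _) (diagonal _), hD]

lemma posSemidef_posSemidefSqrt {A : Matrix n n ℂ} (hA : A.PosSemidef) :
    (posSemidefSqrt hA).PosSemidef := by
  have hd : (diagonal (((↑) ∘ (√·) ∘ hA.1.eigenvalues : n → ℂ))).PosSemidef := by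
    refine PosSemidef.diagonal fun i => ?_
    simp only [Function.comp_apply, Pi.zero_apply]
    exact_mod_cast Real.sqrt_nonneg _
  have := hd.mul_mul_conjTranspose_same (hA.1.eigenvectorUnitary.1)
  unfold posSemidefSqrt
  rwa [star_eq_conjTranspose]

lemma myPosDef_smul {c : ℝ} (hc : 0 < c) {M : Matrix n n ℂ} (hM : M.PosDef) :
    ((c : ℂ) • M).PosDef := by
  refine PosDef.of_dotProduct_mulVec_pos ?_ fun x hx => ?_
  · unfold Matrix.IsHermitian
    rw [conjTranspose_smul, hM.1.eq]
    congr 1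
    simp [Complex.star_def]
  · have h1 : (0:ℂ) < (c:ℂ) := by exact_mod_cast Complex.zero_lt_real.mpr hc
    have := hM.dotProduct_mulVec_pos hx
    calc (0:ℂ) < (c:ℂ) * (star x ⬝ᵥ M *ᵥ x) := mul_pos h1 this
    _ = star x ⬝ᵥ ((c:ℂ) • M) *ᵥ x := by rw [smul_mulVec, dotProduct_smul, smul_eq_mul]

lemma myPosDef_ctms (A : Matrix m n ℂ) (h : ∀ v, A *ᵥ v = 0 → v = 0) :
    (Aᴴ * A).PosDef := by
  refine PosDef.of_dotProduct_mulVec_pos (isHermitian_conjTranspose_mul_self A) fun x hx => ?_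
  rw [← mulVec_mulVec, dotProduct_mulVec, vecMul_conjTranspose, star_star]
  exact dotProduct_star_self_pos_iff.mpr (fun hz => hx (h x hz))

lemma myPosDef_submatrix_equiv {M : Matrix m m ℂ} (hM : M.PosDef) (e : n ≃ m) :
    (M.submatrix e e).PosDef := by
  refine PosDef.of_dotProduct_mulVec_pos ((isHermitian_submatrix_equiv e).mpr hM.1) fun x hx => ?_
  have hx' : x ∘ e.symm ≠ 0 := by
    intro h0
    apply hx
    funext i
    simpa using congrFun h0 (e i)
  have := hM.dotProduct_mulVec_pos hx'
  rw [submatrix_mulVec_equiv]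
  calc (0:ℂ) < star (x ∘ e.symm) ⬝ᵥ M *ᵥ (x ∘ e.symm) := this
  _ = star x ⬝ᵥ (M *ᵥ (x ∘ e.symm)) ∘ e := by
      unfold dotProduct
      exact (Fintype.sum_equiv e _ _ (fun i => by simp)).symm

lemma myPosDef_fromBlocks_left {A : Matrix m m ℂ} {B : Matrix m n ℂ} {C : Matrix n m ℂ}
    {D : Matrix n n ℂ} (h : (fromBlocks A B C D).PosDef) : A.PosDef := by
  refine PosDef.of_dotProduct_mulVec_pos (isHermitian_fromBlocks_iff.mp h.1).1 fun x hx => ?_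
  have hx' : (Sum.elim x (0 : n → ℂ)) ≠ 0 := by
    intro h0
    apply hx
    funext i
    simpa using congrFun h0 (Sum.inl i)
  have := h.dotProduct_mulVec_pos hx'
  simpa [fromBlocks_mulVec, Function.star_sumElim, sumElim_dotProduct_sumElim] using this

lemma myPosDef_schur {A : Matrix m m ℂ} (B : Matrix m n ℂ) {D : Matrix n n ℂ}
    (hA : A.PosDef) (h : (fromBlocks A B Bᴴ D).PosDef) :
    (D - Bᴴ * A⁻¹ * B).PosDef := by
  letI := hA.isUnit.invertible
  refine PosDef.of_dotProduct_mulVec_pos ((Matrix.IsHermitian.fromBlocks₁₁ B D hA.1).mp h.1) fun x hx => ?_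
  have hx' : (Sum.elim (-((A⁻¹ * B) *ᵥ x)) x) ≠ 0 := by
    intro h0
    apply hx
    funext i
    simpa using congrFun h0 (Sum.inr i)
  have := h.dotProduct_mulVec_pos hx'
  rw [dotProduct_mulVec, schur_complement_eq₁₁ B D _ _ hA.1, neg_add_cancel] at this
  simpa [dotProduct_mulVec] using this
lemma proj_mul_self {F : Matrix n m ℂ} (h : (Fᴴ * F).PosDef) : proj F * F = F := by
  unfold proj
  rw [Matrix.mul_assoc, Matrix.mul_assoc,
    Matrix.nonsing_inv_mul _ (Matrix.isUnit_iff_isUnit_det _ |>.mp h.isUnit), Matrix.mul_one]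

lemma isHermitian_proj {F : Matrix n m ℂ} : (proj F).IsHermitian := by
  unfold Matrix.IsHermitian proj
  rw [conjTranspose_mul, conjTranspose_mul, conjTranspose_nonsing_inv,
    (isHermitian_conjTranspose_mul_self F).eq, conjTranspose_conjTranspose, Matrix.mul_assoc]

lemma isHermitian_projPerp {F : Matrix n m ℂ} : (projPerp F).IsHermitian := by
  unfold Matrix.IsHermitian projPerp
  rw [conjTranspose_sub, conjTranspose_one, isHermitian_proj.eq]

lemma projPerp_mul_self {F : Matrix n m ℂ} (h : (Fᴴ * F).PosDef) : projPerp F * F = 0 := by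
  unfold projPerp
  rw [Matrix.sub_mul, Matrix.one_mul, proj_mul_self h, sub_self]

lemma proj_submatrix_equiv (F : Matrix n m ℂ) (e : p ≃ m) :
    proj (F.submatrix id e) = proj F := by
  unfold proj
  rw [conjTranspose_submatrix,
    show Fᴴ.submatrix ⇑e id * F.submatrix id ⇑e = (Fᴴ * F).submatrix ⇑e ⇑e from
      (submatrix_mul _ _ _ id _ Function.bijective_id).symm,
    Matrix.inv_submatrix_equiv]
  simp only [submatrix_mul_equiv, submatrix_id_id]

set_option maxHeartbeats 1600000 in
theorem core_block (X : Matrix n (p ⊕ q) ℂ) (hX : (Xᴴ * X).PosDef) :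
    projPerp (X.submatrix id Sum.inl) * (X.submatrix id Sum.inr) *
      (((Xᴴ * X)⁻¹).submatrix Sum.inr Sum.inr) * (X.submatrix id Sum.inr)ᴴ *
      projPerp (X.submatrix id Sum.inl) = proj X - proj (X.submatrix id Sum.inl) := by
  set X0 : Matrix n p ℂ := X.submatrix id Sum.inl with hX0def
  set B : Matrix n q ℂ := X.submatrix id Sum.inr with hBdef
  have hXc : X = fromCols X0 B := by
    ext i j
    cases j <;> rfl
  have hH : Xᴴ * X = fromBlocks (X0ᴴ * X0) (X0ᴴ * B) ((X0ᴴ * B)ᴴ) (Bᴴ * B) := by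
    rw [hXc, conjTranspose_fromCols_eq_fromRows_conjTranspose, fromRows_mul_fromCols]
    congr 1
    rw [conjTranspose_mul, conjTranspose_conjTranspose]
  have hM : (X0ᴴ * X0).PosDef := myPosDef_fromBlocks_left (hH ▸ hX)
  letI iM : Invertible (X0ᴴ * X0) := hM.isUnit.invertible
  have hMi : ⅟(X0ᴴ * X0) = (X0ᴴ * X0)⁻¹ := invOf_eq_nonsing_inv _
  have hSch : ((Bᴴ * B) - (X0ᴴ * B)ᴴ * (X0ᴴ * X0)⁻¹ * (X0ᴴ * B)).PosDef :=
    myPosDef_schur (X0ᴴ * B) hM (hH ▸ hX)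
  letI iS : Invertible ((Bᴴ * B) - (X0ᴴ * B)ᴴ * ⅟(X0ᴴ * X0) * (X0ᴴ * B)) :=
    hSch.isUnit.invertible.copy _ (by rw [hMi])
  letI iH : Invertible (fromBlocks (X0ᴴ * X0) (X0ᴴ * B) ((X0ᴴ * B)ᴴ) (Bᴴ * B)) :=
    (hH ▸ hX.isUnit).invertible
  have hSi : ⅟((Bᴴ * B) - (X0ᴴ * B)ᴴ * ⅟(X0ᴴ * X0) * (X0ᴴ * B)) =
      ((Bᴴ * B) - (X0ᴴ * B)ᴴ * (X0ᴴ * X0)⁻¹ * (X0ᴴ * B))⁻¹ := by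
    rw [invOf_eq_nonsing_inv, hMi]
  have hG : (Xᴴ * X)⁻¹ =
      fromBlocks
        ((X0ᴴ * X0)⁻¹ + (X0ᴴ * X0)⁻¹ * (X0ᴴ * B) *
            ((Bᴴ * B) - (X0ᴴ * B)ᴴ * (X0ᴴ * X0)⁻¹ * (X0ᴴ * B))⁻¹ * (X0ᴴ * B)ᴴ * (X0ᴴ * X0)⁻¹)
        (-((X0ᴴ * X0)⁻¹ * (X0ᴴ * B) *
            ((Bᴴ * B) - (X0ᴴ * B)ᴴ * (X0ᴴ * X0)⁻¹ * (X0ᴴ * B))⁻¹))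
        (-(((Bᴴ * B) - (X0ᴴ * B)ᴴ * (X0ᴴ * X0)⁻¹ * (X0ᴴ * B))⁻¹ * (X0ᴴ * B)ᴴ * (X0ᴴ * X0)⁻¹))
        (((Bᴴ * B) - (X0ᴴ * B)ᴴ * (X0ᴴ * X0)⁻¹ * (X0ᴴ * B))⁻¹) := by
    rw [hH, ← invOf_eq_nonsing_inv, invOf_fromBlocks₁₁_eq, hSi, hMi]
  have hG22 : ((Xᴴ * X)⁻¹).submatrix Sum.inr Sum.inr =
      ((Bᴴ * B) - (X0ᴴ * B)ᴴ * (X0ᴴ * X0)⁻¹ * (X0ᴴ * B))⁻¹ := by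
    rw [hG]; rfl
  have hPX : proj X =
      X0 * ((X0ᴴ * X0)⁻¹ + (X0ᴴ * X0)⁻¹ * (X0ᴴ * B) *
          ((Bᴴ * B) - (X0ᴴ * B)ᴴ * (X0ᴴ * X0)⁻¹ * (X0ᴴ * B))⁻¹ * (X0ᴴ * B)ᴴ * (X0ᴴ * X0)⁻¹) * X0ᴴ +
        X0 * (-((X0ᴴ * X0)⁻¹ * (X0ᴴ * B) *
          ((Bᴴ * B) - (X0ᴴ * B)ᴴ * (X0ᴴ * X0)⁻¹ * (X0ᴴ * B))⁻¹)) * Bᴴ +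
        B * (-(((Bᴴ * B) - (X0ᴴ * B)ᴴ * (X0ᴴ * X0)⁻¹ * (X0ᴴ * B))⁻¹ * (X0ᴴ * B)ᴴ * (X0ᴴ * X0)⁻¹)) * X0ᴴ +
        B * (((Bᴴ * B) - (X0ᴴ * B)ᴴ * (X0ᴴ * X0)⁻¹ * (X0ᴴ * B))⁻¹) * Bᴴ := by
    unfold proj
    rw [hG]
    nth_rewrite 1 [hXc]
    rw [hXc, conjTranspose_fromCols_eq_fromRows_conjTranspose, fromCols_mul_fromBlocks,
      fromCols_mul_fromRows]
    rw [Matrix.add_mul, Matrix.add_mul]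
    abel
  rw [hG22, hPX]
  unfold projPerp proj
  generalize ((Bᴴ * B) - (X0ᴴ * B)ᴴ * (X0ᴴ * X0)⁻¹ * (X0ᴴ * B))⁻¹ = Si
  generalize (X0ᴴ * X0)⁻¹ = Mi
  clear_value X0 B
  clear * -
  simp only [conjTranspose_mul, conjTranspose_conjTranspose, Matrix.sub_mul, Matrix.mul_sub,
    Matrix.add_mul, Matrix.mul_add, Matrix.one_mul, Matrix.mul_one, Matrix.neg_mul,
    Matrix.mul_neg, Matrix.mul_assoc]
  abel

/-- Statistical equivalence of the Wald test and the 2S-GLRT in the I-GMANOVA model: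
`K P_{A₀}^⊥ S_c^{-1/2} E_r Γ̂₂₂¹ E_rᴴ S_c^{-1/2} P_{A₀}^⊥ = P_{A₁} − P_{A₀}`, hence the Wald
statistic equals the two-step GLR statistic `Tr[Z_{W1}ᴴ (P_{A₁} − P_{A₀}) Z_{W1} P_{C†}]`. -/
theorem wald_equals_two_step_glr
    (N K M t r : ℕ) (hN : 0 < N) (hK : 0 < K) (hM : 0 < M) (ht : 0 < t) (hr : 0 < r)
    (hJ : t + r ≤ N) (hMK : M ≤ K)
    (Sc : Matrix (Fin N) (Fin N) ℂ) (hS : Sc.PosDef)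
    (Z : Matrix (Fin N) (Fin K) ℂ) :
    -- `E_t` : first `t` columns of `I_N`
    let Et : Matrix (Fin N) (Fin t) ℂ := Matrix.of fun i j => if (i : ℕ) = (j : ℕ) then 1 else 0
    -- `E_r` : columns `t+1, …, t+r` of `I_N`
    let Er : Matrix (Fin N) (Fin r) ℂ :=
      Matrix.of fun i j => if (i : ℕ) = t + (j : ℕ) then 1 else 0
    -- `A = [E_t E_r]` : first `t + r` columns of `I_N`
    let A : Matrix (Fin N) (Fin (t + r)) ℂ :=
      Matrix.of fun i j => if (i : ℕ) = (j : ℕ) then 1 else 0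
    let C : Matrix (Fin M) (Fin K) ℂ := Matrix.of fun i j => if (i : ℕ) = (j : ℕ) then 1 else 0
    let PC : Matrix (Fin K) (Fin K) ℂ := Cᴴ * (C * Cᴴ)⁻¹ * C
    let Shalf : Matrix (Fin N) (Fin N) ℂ := posSemidefSqrt hS.posSemidef
    let ZW1 : Matrix (Fin N) (Fin K) ℂ := Shalf⁻¹ * Z
    let A1 : Matrix (Fin N) (Fin (t + r)) ℂ := Shalf⁻¹ * A
    let A0 : Matrix (Fin N) (Fin t) ℂ := Shalf⁻¹ * Et
    let R1 : Matrix (Fin N) (Fin N) ℂ :=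
      ((K : ℂ))⁻¹ • (Sc + Shalf * projPerp A1 * ZW1 * PC * ZW1ᴴ * projPerp A1 * Shalf)
    let Γhat : Matrix (Fin (t + r)) (Fin (t + r)) ℂ := (Aᴴ * R1⁻¹ * A)⁻¹
    -- lower-right `r × r` block of `Γ̂¹`
    let Γ22 : Matrix (Fin r) (Fin r) ℂ := Γhat.submatrix (Fin.natAdd t) (Fin.natAdd t)
    R1.PosDef ∧
      (K : ℂ) • (projPerp A0 * (Shalf⁻¹ * Er * Γ22 * Erᴴ * Shalf⁻¹) * projPerp A0) =
        proj A1 - proj A0 ∧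
      (ZW1ᴴ * ((K : ℂ) • (projPerp A0 * (Shalf⁻¹ * Er * Γ22 * Erᴴ * Shalf⁻¹) * projPerp A0)) *
          ZW1 * PC).trace =
        (ZW1ᴴ * (proj A1 - proj A0) * ZW1 * PC).trace := by
  intro Et Er A C PC Shalf ZW1 A1 A0 R1 Γhat Γ22
  have hK0 : (K : ℂ) ≠ 0 := Nat.cast_ne_zero.mpr hK.ne'
  -- facts about Shalf
  have hSq : Shalf * Shalf = Sc := posSemidefSqrt_mul_self hS.posSemidef
  have hShalfPSD : Shalf.PosSemidef := posSemidef_posSemidefSqrt hS.posSemidef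
  have hShalfH : Shalf.IsHermitian := hShalfPSD.isHermitian
  have hShalfPD : Shalf.PosDef := by
    refine PosDef.of_dotProduct_mulVec_pos hShalfH fun x hx => lt_of_le_of_ne (hShalfPSD.dotProduct_mulVec_nonneg x) fun h0 => ?_
    have hker : Shalf *ᵥ x = 0 := (hShalfPSD.dotProduct_mulVec_zero_iff x).mp h0.symm
    have hSc0 : Sc *ᵥ x = 0 := by
      rw [← hSq, ← mulVec_mulVec, hker, mulVec_zero]
    have := hS.dotProduct_mulVec_pos hx
    rw [hSc0, dotProduct_zero] at this
    exact lt_irrefl _ this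
  have hSdet : IsUnit Shalf.det := (Matrix.isUnit_iff_isUnit_det _).mp hShalfPD.isUnit
  have hShalfInvH : (Shalf⁻¹).IsHermitian := hShalfH.inv
  -- A, C identities
  have hAsub : A = (1 : Matrix (Fin N) (Fin N) ℂ).submatrix id (Fin.castLE hJ) := by
    ext i j
    simp [A, Matrix.one_apply, Fin.ext_iff]
  have hAA : Aᴴ * A = 1 := by
    rw [hAsub, conjTranspose_submatrix, conjTranspose_one,
      show ((1 : Matrix (Fin N) (Fin N) ℂ).submatrix (Fin.castLE hJ) id) *
          ((1 : Matrix (Fin N) (Fin N) ℂ).submatrix id (Fin.castLE hJ)) =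
          ((1 : Matrix (Fin N) (Fin N) ℂ) * 1).submatrix (Fin.castLE hJ) (Fin.castLE hJ) from
        (submatrix_mul _ _ _ id _ Function.bijective_id).symm,
      Matrix.one_mul, submatrix_one _ (Fin.castLE_injective hJ)]
  have hCsub : C = (1 : Matrix (Fin K) (Fin K) ℂ).submatrix (Fin.castLE hMK) id := by
    ext i j
    simp [C, Matrix.one_apply, Fin.ext_iff]
  have hCC : C * Cᴴ = 1 := by
    rw [hCsub, conjTranspose_submatrix, conjTranspose_one,
      show ((1 : Matrix (Fin K) (Fin K) ℂ).submatrix (Fin.castLE hMK) id) *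
          ((1 : Matrix (Fin K) (Fin K) ℂ).submatrix id (Fin.castLE hMK)) =
          ((1 : Matrix (Fin K) (Fin K) ℂ) * 1).submatrix (Fin.castLE hMK) (Fin.castLE hMK) from
        (submatrix_mul _ _ _ id _ Function.bijective_id).symm,
      Matrix.one_mul, submatrix_one _ (Fin.castLE_injective hMK)]
  have hPCeq : PC = Cᴴ * C := by
    show Cᴴ * (C * Cᴴ)⁻¹ * C = Cᴴ * C
    rw [hCC, inv_one, Matrix.mul_one]
  -- Et, Er as submatrices of A
  have hEt : A.submatrix id (Fin.castAdd r) = Et := by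
    ext i j
    simp [A, Et]
  have hEr : A.submatrix id (Fin.natAdd t) = Er := by
    ext i j
    simp [A, Er]
  -- A1 has full column rank
  have hA1PD : (A1ᴴ * A1).PosDef := by
    apply myPosDef_ctms
    intro v hv
    have h1 : Shalf⁻¹ *ᵥ (A *ᵥ v) = 0 := by
      rw [mulVec_mulVec]; exact hv
    have h2 : A *ᵥ v = 0 := by
      have := congrArg (fun w => Shalf *ᵥ w) h1
      simpa [mulVec_mulVec, ← Matrix.mul_assoc, Matrix.mul_nonsing_inv _ hSdet] using this
    calc v = (Aᴴ * A) *ᵥ v := by rw [hAA, one_mulVec]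
    _ = Aᴴ *ᵥ (A *ᵥ v) := by rw [mulVec_mulVec]
    _ = 0 := by rw [h2, mulVec_zero]
  have hPerpA1 : projPerp A1 * A1 = 0 := projPerp_mul_self hA1PD
  have hPerpH : (projPerp A1).IsHermitian := isHermitian_projPerp
  -- R1 is positive definite
  have hInner : Sc + Shalf * projPerp A1 * ZW1 * PC * ZW1ᴴ * projPerp A1 * Shalf =
      Sc + (Shalf * projPerp A1 * ZW1 * Cᴴ) * (Shalf * projPerp A1 * ZW1 * Cᴴ)ᴴ := by
    rw [hPCeq]
    simp only [conjTranspose_mul, conjTranspose_conjTranspose, hPerpH.eq, hShalfH.eq,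
      Matrix.mul_assoc]
  have hTPD : (Sc + Shalf * projPerp A1 * ZW1 * PC * ZW1ᴴ * projPerp A1 * Shalf).PosDef := by
    rw [hInner]
    exact hS.add_posSemidef (posSemidef_self_mul_conjTranspose _)
  have hcast : (((K : ℝ)⁻¹ : ℝ) : ℂ) = (K : ℂ)⁻¹ := by push_cast; ring
  have hR1PD : R1.PosDef := by
    have hc : (0 : ℝ) < (K : ℝ)⁻¹ := by positivity
    have h := myPosDef_smul hc hTPD
    rw [hcast] at h
    exact h
  suffices key : (K : ℂ) • (projPerp A0 * (Shalf⁻¹ * Er * Γ22 * Erᴴ * Shalf⁻¹) * projPerp A0) =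
      proj A1 - proj A0 by
    exact ⟨hR1PD, key, by rw [key]⟩
  -- the W matrix
  · set W : Matrix (Fin N) (Fin N) ℂ :=
      1 + projPerp A1 * ZW1 * PC * ZW1ᴴ * projPerp A1 with hWdef
    have hWPD : W.PosDef := by
      rw [hWdef]
      have h2 : projPerp A1 * ZW1 * PC * ZW1ᴴ * projPerp A1 =
          (projPerp A1 * ZW1 * Cᴴ) * (projPerp A1 * ZW1 * Cᴴ)ᴴ := by
        rw [hPCeq]
        simp only [conjTranspose_mul, conjTranspose_conjTranspose, hPerpH.eq, Matrix.mul_assoc]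
      rw [h2]
      exact Matrix.PosDef.one.add_posSemidef (posSemidef_self_mul_conjTranspose _)
    have hWdet : IsUnit W.det := (Matrix.isUnit_iff_isUnit_det _).mp hWPD.isUnit
    have hT : Sc + Shalf * projPerp A1 * ZW1 * PC * ZW1ᴴ * projPerp A1 * Shalf =
        Shalf * W * Shalf := by
      rw [hWdef, ← hSq]
      simp only [Matrix.mul_add, Matrix.add_mul, Matrix.mul_one, Matrix.one_mul,
        Matrix.mul_assoc]
    have hTPD2 : (Shalf * W * Shalf).PosDef := by rw [← hT]; exact hTPD
    have hTdet : IsUnit (Shalf * W * Shalf).det := (Matrix.isUnit_iff_isUnit_det _).mp hTPD2.isUnit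
    have hR1 : R1 = (K : ℂ)⁻¹ • (Shalf * W * Shalf) := by
      show ((K : ℂ))⁻¹ • (Sc + Shalf * projPerp A1 * ZW1 * PC * ZW1ᴴ * projPerp A1 * Shalf) = _
      rw [hT]
    have hR1inv : R1⁻¹ = (K : ℂ) • (Shalf⁻¹ * (W⁻¹ * Shalf⁻¹)) := by
      letI : Invertible ((K : ℂ)⁻¹) := invertibleOfNonzero (inv_ne_zero hK0)
      rw [hR1, Matrix.inv_smul _ _ hTdet, invOf_eq_inv, inv_inv, Matrix.mul_inv_rev,
        Matrix.mul_inv_rev]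
    have hWA1 : W * A1 = A1 := by
      rw [hWdef]
      simp only [Matrix.add_mul, Matrix.one_mul, Matrix.mul_assoc, hPerpA1, Matrix.mul_zero,
        add_zero]
    have hWiA1 : W⁻¹ * A1 = A1 := by
      conv_lhs => rw [← hWA1]
      rw [← Matrix.mul_assoc, Matrix.nonsing_inv_mul _ hWdet, Matrix.one_mul]
    have e1 : A1ᴴ = Aᴴ * Shalf⁻¹ := by
      rw [show A1 = Shalf⁻¹ * A from rfl, conjTranspose_mul, hShalfInvH.eq]
    have hARA : Aᴴ * R1⁻¹ * A = (K : ℂ) • (A1ᴴ * A1) := by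
      rw [hR1inv, Matrix.mul_smul, Matrix.smul_mul]
      congr 1
      have inner : Aᴴ * (Shalf⁻¹ * (W⁻¹ * Shalf⁻¹)) * A = A1ᴴ * (W⁻¹ * A1) := by
        rw [e1, show A1 = Shalf⁻¹ * A from rfl]
        simp only [Matrix.mul_assoc]
      rw [inner, hWiA1]
    have hHdet : IsUnit (A1ᴴ * A1).det := (Matrix.isUnit_iff_isUnit_det _).mp hA1PD.isUnit
    have hΓ : Γhat = (K : ℂ)⁻¹ • (A1ᴴ * A1)⁻¹ := by
      show (Aᴴ * R1⁻¹ * A)⁻¹ = _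
      letI : Invertible ((K : ℂ)) := invertibleOfNonzero hK0
      rw [hARA, Matrix.inv_smul _ _ hHdet, invOf_eq_inv]
    have hΓ22 : Γ22 = (K : ℂ)⁻¹ •
        (((A1ᴴ * A1)⁻¹).submatrix (Fin.natAdd t) (Fin.natAdd t)) := by
      show Γhat.submatrix (Fin.natAdd t) (Fin.natAdd t) = _
      rw [hΓ]
      ext i j
      rfl
    rw [hΓ22]
    simp only [Matrix.mul_smul, Matrix.smul_mul]
    rw [smul_smul, mul_inv_cancel₀ hK0, one_smul]
    -- now apply the core block lemma
    set X : Matrix (Fin N) (Fin t ⊕ Fin r) ℂ := A1.submatrix id ⇑finSumFinEquiv with hXdef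
    have hX0 : X.submatrix id Sum.inl = A0 := by
      rw [hXdef, submatrix_submatrix]
      have hc1 : (⇑finSumFinEquiv ∘ Sum.inl : Fin t → Fin (t + r)) = Fin.castAdd r := by
        funext j; exact finSumFinEquiv_apply_left j
      rw [show ((id ∘ id) : Fin N → Fin N) = id from rfl, hc1]
      show (Shalf⁻¹ * A).submatrix id (Fin.castAdd r) = Shalf⁻¹ * Et
      rw [show (Shalf⁻¹ * A).submatrix id (Fin.castAdd r) =
          Shalf⁻¹.submatrix id id * A.submatrix id (Fin.castAdd r) from
        submatrix_mul _ _ _ id _ Function.bijective_id, submatrix_id_id, hEt]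
    have hX1 : X.submatrix id Sum.inr = Shalf⁻¹ * Er := by
      rw [hXdef, submatrix_submatrix]
      have hc1 : (⇑finSumFinEquiv ∘ Sum.inr : Fin r → Fin (t + r)) = Fin.natAdd t := by
        funext j; exact finSumFinEquiv_apply_right j
      rw [show ((id ∘ id) : Fin N → Fin N) = id from rfl, hc1]
      show (Shalf⁻¹ * A).submatrix id (Fin.natAdd t) = Shalf⁻¹ * Er
      rw [show (Shalf⁻¹ * A).submatrix id (Fin.natAdd t) =
          Shalf⁻¹.submatrix id id * A.submatrix id (Fin.natAdd t) from
        submatrix_mul _ _ _ id _ Function.bijective_id, submatrix_id_id, hEr]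
    have hXH : Xᴴ * X = (A1ᴴ * A1).submatrix ⇑finSumFinEquiv ⇑finSumFinEquiv := by
      rw [hXdef, conjTranspose_submatrix]
      exact (submatrix_mul _ _ _ id _ Function.bijective_id).symm
    have hXPD : (Xᴴ * X).PosDef := by
      rw [hXH]; exact myPosDef_submatrix_equiv hA1PD finSumFinEquiv
    have hG22X : ((Xᴴ * X)⁻¹).submatrix Sum.inr Sum.inr =
        ((A1ᴴ * A1)⁻¹).submatrix (Fin.natAdd t) (Fin.natAdd t) := by
      rw [hXH, Matrix.inv_submatrix_equiv, submatrix_submatrix]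
      congr 1 <;> (funext j; exact finSumFinEquiv_apply_right j)
    have hprojX : proj X = proj A1 := proj_submatrix_equiv A1 finSumFinEquiv
    have core := core_block X hXPD
    rw [hX0, hX1, hG22X, hprojX,
      show (Shalf⁻¹ * Er)ᴴ = Erᴴ * Shalf⁻¹ from by rw [conjTranspose_mul, hShalfInvH.eq]]
      at core
    rw [← core]
    simp only [Matrix.mul_assoc]
end
end

section
/- Let W ∈ ℂ^{N×N} be Hermitian positive definite, E_r ∈ ℂ^{N×r} and A = [E_t E_r] ∈ ℂ^{N×(t+r)} with A of full column rank, and let Γ₂₂ ∈ ℂ^{r×r} be the lower-right r×r block of (A†WA)⁻¹. Let C ∈ ℂ^{M×K} have full row rank, set G = E_r† W E_r, P_{C†} = C†(CC†)⁻¹C, and for Y ∈ ℂ^{N×K} let B̂₀ = G⁻¹ E_r† W Y C† (CC†)⁻¹. Then vec(B̂₀)† [ (CC†)ᵀ ⊗ (G Γ₂₂ G) ] vec(B̂₀) = Tr[ Y† W E_r Γ₂₂ E_r† W Y P_{C†} ]; i.e., the closed-form Durbin statistic coincides with the closed-form Rao statistic (Theorem 1: statistical equivalence of the Durbin and Rao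 tests for the I-GMANOVA model). -/
open Matrix
open scoped ComplexOrder Kronecker

noncomputable section

/-- Column-stacking vectorization: `vec B` stacks the columns of `B` one under another
(index pairs are (column, row)). -/
def vec {r M : Type*} (B : Matrix r M ℂ) : M × r → ℂ := fun p => B p.2 p.1

lemma isUnit_of_rank_eq_card {m : Type*} [Fintype m] [DecidableEq m] (A : Matrix m m ℂ)
    (h : A.rank = Fintype.card m) : IsUnit A := by
  rw [← Matrix.mulVec_surjective_iff_isUnit]
  have htop : LinearMap.range A.mulVecLin = ⊤ := by
    apply Submodule.eq_top_of_finrank_eq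
    rw [← Matrix.rank, h, Module.finrank_fintype_fun_eq_card]
  intro v
  obtain ⟨x, hx⟩ := LinearMap.range_eq_top.1 htop v
  exact ⟨x, hx⟩

lemma mulVec_inj_of_rank {n m : Type*} [Fintype n] [Fintype m] [DecidableEq m] [DecidableEq n]
    (A : Matrix n m ℂ) (h : A.rank = Fintype.card m) : Function.Injective A.mulVec := by
  have h1 : IsUnit (Aᴴ * A) :=
    isUnit_of_rank_eq_card _ (by rw [Matrix.rank_conjTranspose_mul_self, h])
  have h2 := Matrix.mulVec_injective_iff_isUnit.2 h1
  intro x y hxy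
  apply h2
  simp only [← Matrix.mulVec_mulVec, hxy]

lemma gram_isUnit {n r : Type*} [Fintype n] [Fintype r] [DecidableEq r] [DecidableEq n]
    (W : Matrix n n ℂ) (hW : W.PosDef) (Er : Matrix n r ℂ)
    (hinj : Function.Injective Er.mulVec) : IsUnit (Erᴴ * W * Er) := by
  rw [← Matrix.mulVec_injective_iff_isUnit]
  have hker : ∀ x, (Erᴴ * W * Er) *ᵥ x = 0 → x = 0 := by
    intro x hx
    by_contra hx0
    have hEx : Er *ᵥ x ≠ 0 := fun h => hx0 (hinj (h.trans (Matrix.mulVec_zero Er).symm))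
    have hpos := hW.dotProduct_mulVec_pos hEx
    have : star (Er *ᵥ x) ⬝ᵥ W *ᵥ (Er *ᵥ x) = star x ⬝ᵥ ((Erᴴ * W * Er) *ᵥ x) := by
      rw [Matrix.star_mulVec, ← Matrix.dotProduct_mulVec, Matrix.mulVec_mulVec,
        Matrix.mulVec_mulVec, Matrix.dotProduct_mulVec]
    rw [this, hx, dotProduct_zero] at hpos
    exact lt_irrefl _ hpos
  intro x y hxy
  have h0 : (Erᴴ * W * Er) *ᵥ (x - y) = 0 := by
    rw [Matrix.mulVec_sub, hxy, sub_self]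
  exact sub_eq_zero.1 (hker _ h0)

lemma vec_quad {m r : Type*} [Fintype m] [Fintype r] (X : Matrix m m ℂ) (K : Matrix r r ℂ)
    (B : Matrix r m ℂ) :
    star (_root_.vec B) ⬝ᵥ ((Xᵀ ⊗ₖ K) *ᵥ _root_.vec B) = (X * Bᴴ * K * B).trace := by
  simp only [dotProduct, mulVec, _root_.vec, Pi.star_apply, kroneckerMap_apply, trace, diag,
    mul_apply, conjTranspose_apply, Fintype.sum_prod_type, transpose_apply,
    Finset.mul_sum, Finset.sum_mul]
  conv_lhs => enter [2, i]; rw [Finset.sum_comm]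
  conv_lhs => rw [Finset.sum_comm]
  conv_lhs => enter [2, j]; rw [Finset.sum_comm]
  conv_lhs => enter [2, j, 2, a]; rw [Finset.sum_comm]
  conv_lhs => enter [2, j]; rw [Finset.sum_comm]
  refine Finset.sum_congr rfl fun j _ => Finset.sum_congr rfl fun b _ =>
    Finset.sum_congr rfl fun a _ => Finset.sum_congr rfl fun i _ => ?_
  ring

/-- Theorem 1 of the paper (algebraic core): the closed-form Durbin statistic coincides with
the closed-form Rao statistic,
`vec(B̂₀)ᴴ [(CCᴴ)ᵀ ⊗ (G Γ₂₂ G)] vec(B̂₀) = Tr[Yᴴ W E_r Γ₂₂ E_rᴴ W Y P_{Cᴴ}]`. -/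
theorem durbin_equals_rao
    {n k : Type*} [Fintype n] [DecidableEq n] [Fintype k] [DecidableEq k]
    (t r M : ℕ) (ht : 0 < t) (hr : 0 < r) (hM : 0 < M)
    (W : Matrix n n ℂ) (hW : W.PosDef)
    (Et : Matrix n (Fin t) ℂ) (Er : Matrix n (Fin r) ℂ)
    (hA : (fromCols Et Er).rank = t + r)
    (C : Matrix (Fin M) k ℂ) (hC : C.rank = M)
    (Y : Matrix n k ℂ) :
    let A : Matrix n (Fin t ⊕ Fin r) ℂ := fromCols Et Er
    let Γ22 : Matrix (Fin r) (Fin r) ℂ := ((Aᴴ * W * A)⁻¹).toBlocks₂₂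
    let G : Matrix (Fin r) (Fin r) ℂ := Erᴴ * W * Er
    let PC : Matrix k k ℂ := Cᴴ * (C * Cᴴ)⁻¹ * C
    let B0 : Matrix (Fin r) (Fin M) ℂ := G⁻¹ * Erᴴ * W * Y * Cᴴ * (C * Cᴴ)⁻¹
    star (_root_.vec B0) ⬝ᵥ ((((C * Cᴴ)ᵀ) ⊗ₖ (G * Γ22 * G)) *ᵥ _root_.vec B0) =
      (Yᴴ * W * Er * Γ22 * Erᴴ * W * Y * PC).trace := by
  intro A Γ22 G PC B0
  -- invertibility of C * Cᴴ
  have hCC : IsUnit (C * Cᴴ) := isUnit_of_rank_eq_card _ (by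
    rw [Matrix.rank_self_mul_conjTranspose, hC, Fintype.card_fin])
  have hCCdet : IsUnit (C * Cᴴ).det := (Matrix.isUnit_iff_isUnit_det _).1 hCC
  -- injectivity of Er
  have hAinj : Function.Injective A.mulVec :=
    mulVec_inj_of_rank _ (by simp [A, hA])
  have hErinj : Function.Injective Er.mulVec := by
    intro x y hxy
    have h1 : A *ᵥ (Sum.elim 0 x) = A *ᵥ (Sum.elim 0 y) := by
      rw [Matrix.fromCols_mulVec_sumElim, Matrix.fromCols_mulVec_sumElim,
        Matrix.mulVec_zero, zero_add, zero_add, hxy]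
    have h2 := hAinj h1
    funext i
    exact congrFun h2 (Sum.inr i)
  -- invertibility of G
  have hG : IsUnit G := gram_isUnit W hW Er hErinj
  have hGdet : IsUnit G.det := (Matrix.isUnit_iff_isUnit_det _).1 hG
  -- Hermitian facts
  have hGH : Gᴴ = G := by
    show (Erᴴ * W * Er)ᴴ = Erᴴ * W * Er
    simp [Matrix.conjTranspose_mul, hW.1.eq, Matrix.mul_assoc]
  have hXH : (C * Cᴴ)ᴴ = C * Cᴴ := by
    simp [Matrix.conjTranspose_mul]
  have hB0H : B0ᴴ = (C * Cᴴ)⁻¹ * C * Yᴴ * W * Er * G⁻¹ := by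
    show (G⁻¹ * Erᴴ * W * Y * Cᴴ * (C * Cᴴ)⁻¹)ᴴ = _
    simp only [Matrix.conjTranspose_mul, Matrix.conjTranspose_nonsing_inv, hXH, hGH,
      hW.1.eq, Matrix.conjTranspose_conjTranspose, Matrix.mul_assoc]
  rw [vec_quad]
  have hmat : (C * Cᴴ) * B0ᴴ * (G * Γ22 * G) * B0 =
      C * ((Yᴴ * W * Er * Γ22 * Erᴴ * W * Y) * (Cᴴ * (C * Cᴴ)⁻¹)) := by
    rw [hB0H]
    show (C * Cᴴ) * ((C * Cᴴ)⁻¹ * C * Yᴴ * W * Er * G⁻¹) * (G * Γ22 * G) *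
      (G⁻¹ * Erᴴ * W * Y * Cᴴ * (C * Cᴴ)⁻¹) = _
    simp only [Matrix.mul_assoc, Matrix.mul_nonsing_inv_cancel_left _ _ hCCdet,
      Matrix.nonsing_inv_mul_cancel_left _ _ hGdet,
      Matrix.mul_nonsing_inv_cancel_left _ _ hGdet]
  rw [hmat, Matrix.trace_mul_comm]
  show ((Yᴴ * W * Er * Γ22 * Erᴴ * W * Y * (Cᴴ * (C * Cᴴ)⁻¹)) * C).trace =
    (Yᴴ * W * Er * Γ22 * Erᴴ * W * Y * (Cᴴ * (C * Cᴴ)⁻¹ * C)).trace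
  rw [Matrix.mul_assoc (Yᴴ * W * Er * Γ22 * Erᴴ * W * Y)]
end
end

section
/- Let t, r, q, M be positive integers, N = t + r + q, and let S ∈ ℂ^{N×N} be Hermitian positive definite with 3×3 block partition S = (S_{ij})_{i,j=1,2,3} conformal to (t, r, q). Let X ∈ ℂ^{N×M} with row blocks X₁ ∈ ℂ^{t×M}, X₂ ∈ ℂ^{r×M}, X₃ ∈ ℂ^{q×M}. Let E_t be the first t columns of I_N and A₀ = S^{-1/2}E_t. Then (S^{-1/2}X)† P_{A₀}^⊥ (S^{-1/2}X) = X_{2.3}† S_{2.3}⁻¹ X_{2.3} + X₃† S₃₃⁻¹ X₃, where X_{2.3} = X₂ − S₂₃ S₃₃⁻¹ X₃ and S_{2.3} = S₂₂ − S₂₃ S₃₃⁻¹ S₃₂ (both S₃₃ and S_{2.3} being invertible). -/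
open Matrix
open scoped ComplexOrder

noncomputable section

namespace Eq38

lemma mul_mul_cancel {n k p : Type*} [Fintype n] [Fintype k] [DecidableEq n] {A : Matrix n k ℂ}
    {B : Matrix k n ℂ} (h : A * B = 1) (W : Matrix n p ℂ) : A * (B * W) = W := by
  rw [← Matrix.mul_assoc, h, Matrix.one_mul]

lemma mul_mul_zero {l n m p : Type*} [Fintype n] [Fintype m] {A : Matrix l n ℂ}
    {B : Matrix n m ℂ} (h : A * B = 0) (W : Matrix m p ℂ) : A * (B * W) = 0 := by
  rw [← Matrix.mul_assoc, h, Matrix.zero_mul]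

lemma subone_mul {N n m : Type*} [Fintype N] [DecidableEq N] [Fintype n] (e : n → N)
    (A : Matrix N m ℂ) : (1 : Matrix N N ℂ).submatrix e id * A = A.submatrix e id := by
  have := (Matrix.submatrix_mul (1 : Matrix N N ℂ) A e id id Function.bijective_id).symm
  simpa using this

lemma mul_subone {N n m : Type*} [Fintype N] [DecidableEq N] [Fintype m] (e : n → N)
    (A : Matrix m N ℂ) : A * (1 : Matrix N N ℂ).submatrix id e = A.submatrix id e := by
  have := (Matrix.submatrix_mul A (1 : Matrix N N ℂ) id id e Function.bijective_id).symm
  simpa using this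

lemma posDef_conj {N n : Type*} [Fintype N] [Fintype n] [DecidableEq n] {S : Matrix N N ℂ}
    (hS : S.PosDef)
    (F : Matrix N n ℂ) (hF : Fᴴ * F = 1) : (Fᴴ * S * F).PosDef := by
  refine Matrix.PosDef.of_dotProduct_mulVec_pos (Matrix.isHermitian_conjTranspose_mul_mul F hS.1)
    fun x hx => ?_
  have hker : F *ᵥ x ≠ 0 := by
    intro h
    apply hx
    have : (Fᴴ * F) *ᵥ x = Fᴴ *ᵥ (F *ᵥ x) := (Matrix.mulVec_mulVec _ _ _).symm
    rw [hF, h, Matrix.mulVec_zero, Matrix.one_mulVec] at this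
    exact this
  have := hS.dotProduct_mulVec_pos hker
  simpa only [star_mulVec, Matrix.dotProduct_mulVec, Matrix.vecMul_vecMul] using this

end Eq38

open Eq38

set_option maxHeartbeats 4000000 in
/-- Eq. (38) of the paper: with `A₀ = S^{-1/2} E_t`,
`(S^{-1/2}X)ᴴ P_{A₀}^⊥ (S^{-1/2}X) = X_{2.3}ᴴ S_{2.3}⁻¹ X_{2.3} + X₃ᴴ S₃₃⁻¹ X₃`. -/
theorem whitened_quadratic_form_H0
    (t r q M : ℕ) (ht : 0 < t) (hr : 0 < r) (hq : 0 < q) (hM : 0 < M)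
    (S : Matrix ((Fin t ⊕ Fin r) ⊕ Fin q) ((Fin t ⊕ Fin r) ⊕ Fin q) ℂ) (hS : S.PosDef)
    (X : Matrix ((Fin t ⊕ Fin r) ⊕ Fin q) (Fin M) ℂ) :
    let S22 : Matrix (Fin r) (Fin r) ℂ := S.submatrix (Sum.inl ∘ Sum.inr) (Sum.inl ∘ Sum.inr)
    let S23 : Matrix (Fin r) (Fin q) ℂ := S.submatrix (Sum.inl ∘ Sum.inr) Sum.inr
    let S32 : Matrix (Fin q) (Fin r) ℂ := S.submatrix Sum.inr (Sum.inl ∘ Sum.inr)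
    let S33 : Matrix (Fin q) (Fin q) ℂ := S.submatrix Sum.inr Sum.inr
    let X2 : Matrix (Fin r) (Fin M) ℂ := X.submatrix (Sum.inl ∘ Sum.inr) id
    let X3 : Matrix (Fin q) (Fin M) ℂ := X.submatrix Sum.inr id
    -- `E_t` : first `t` columns of `I_N`
    let Et : Matrix ((Fin t ⊕ Fin r) ⊕ Fin q) (Fin t) ℂ := fromRows (fromRows 1 0) 0
    let Shalf : Matrix ((Fin t ⊕ Fin r) ⊕ Fin q) ((Fin t ⊕ Fin r) ⊕ Fin q) ℂ :=
      (hS.posSemidef.1.eigenvectorUnitary : Matrix ((Fin t ⊕ Fin r) ⊕ Fin q) ((Fin t ⊕ Fin r) ⊕ Fin q) ℂ) *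
        diagonal ((↑) ∘ (√·) ∘ hS.posSemidef.1.eigenvalues) *
        (star hS.posSemidef.1.eigenvectorUnitary : Matrix ((Fin t ⊕ Fin r) ⊕ Fin q) ((Fin t ⊕ Fin r) ⊕ Fin q) ℂ)
    let A0 : Matrix ((Fin t ⊕ Fin r) ⊕ Fin q) (Fin t) ℂ := Shalf⁻¹ * Et
    let S2d3 : Matrix (Fin r) (Fin r) ℂ := S22 - S23 * S33⁻¹ * S32
    let X2d3 : Matrix (Fin r) (Fin M) ℂ := X2 - S23 * S33⁻¹ * X3
    IsUnit S33 ∧ IsUnit S2d3 ∧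
      (Shalf⁻¹ * X)ᴴ * projPerp A0 * (Shalf⁻¹ * X) =
        X2d3ᴴ * S2d3⁻¹ * X2d3 + X3ᴴ * S33⁻¹ * X3 := by
  intro S22 S23 S32 S33 X2 X3 Et Shalf A0 S2d3 X2d3
  -- record the definitions, then make all the `let`-variables opaque
  have hS22_def : S22 = S.submatrix (Sum.inl ∘ Sum.inr) (Sum.inl ∘ Sum.inr) := rfl
  have hS23_def : S23 = S.submatrix (Sum.inl ∘ Sum.inr) Sum.inr := rfl
  have hS32_def : S32 = S.submatrix Sum.inr (Sum.inl ∘ Sum.inr) := rfl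
  have hS33_def : S33 = S.submatrix Sum.inr Sum.inr := rfl
  have hX2_def : X2 = X.submatrix (Sum.inl ∘ Sum.inr) id := rfl
  have hX3_def : X3 = X.submatrix Sum.inr id := rfl
  have hEt_def : Et = fromRows (fromRows 1 0) 0 := rfl
  have hShalf_sq : Shalf * Shalf = S := by
    have hU : (star hS.posSemidef.1.eigenvectorUnitary : Matrix ((Fin t ⊕ Fin r) ⊕ Fin q) ((Fin t ⊕ Fin r) ⊕ Fin q) ℂ) *
        (hS.posSemidef.1.eigenvectorUnitary : Matrix ((Fin t ⊕ Fin r) ⊕ Fin q) ((Fin t ⊕ Fin r) ⊕ Fin q) ℂ) = 1 := by simp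
    conv_rhs => rw [hS.posSemidef.1.spectral_theorem, Unitary.conjStarAlgAut_apply]
    simp only [Shalf, Matrix.mul_assoc]
    rw [← Matrix.mul_assoc _ (hS.posSemidef.1.eigenvectorUnitary : Matrix ((Fin t ⊕ Fin r) ⊕ Fin q) ((Fin t ⊕ Fin r) ⊕ Fin q) ℂ), hU,
      Matrix.one_mul, ← Matrix.mul_assoc (diagonal _) (diagonal _), diagonal_mul_diagonal]
    congr 3
    funext i
    simp only [Function.comp_apply]
    rw [← Complex.ofReal_mul, Real.mul_self_sqrt (hS.posSemidef.eigenvalues_nonneg i)]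
    rfl
  have hShalfH : Shalfᴴ = Shalf := by
    simp only [Shalf, conjTranspose_mul, diagonal_conjTranspose, Matrix.mul_assoc]
    rw [← Matrix.star_eq_conjTranspose, ← Matrix.star_eq_conjTranspose, star_star]
    congr 3
    funext i
    simp
  have hA0_def : A0 = Shalf⁻¹ * Et := rfl
  have hS2d3_def : S2d3 = S22 - S23 * S33⁻¹ * S32 := rfl
  have hX2d3_def : X2d3 = X2 - S23 * S33⁻¹ * X3 := rfl
  clear_value S22 S23 S32 S33 X2 X3 Et Shalf A0 S2d3 X2d3
  -- selection maps and matrices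
  set e : Fin t → (Fin t ⊕ Fin r) ⊕ Fin q := Sum.inl ∘ Sum.inl with he_def
  set g : Fin r ⊕ Fin q → (Fin t ⊕ Fin r) ⊕ Fin q := Sum.elim (Sum.inl ∘ Sum.inr) Sum.inr
    with hg_def
  set E : Matrix ((Fin t ⊕ Fin r) ⊕ Fin q) (Fin t) ℂ :=
    (1 : Matrix ((Fin t ⊕ Fin r) ⊕ Fin q) ((Fin t ⊕ Fin r) ⊕ Fin q) ℂ).submatrix id e with hE_def
  set F : Matrix ((Fin t ⊕ Fin r) ⊕ Fin q) (Fin r ⊕ Fin q) ℂ :=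
    (1 : Matrix ((Fin t ⊕ Fin r) ⊕ Fin q) ((Fin t ⊕ Fin r) ⊕ Fin q) ℂ).submatrix id g with hF_def
  have he_inj : Function.Injective e :=
    Sum.inl_injective.comp Sum.inl_injective
  have hg_inj : Function.Injective g := by
    apply Function.Injective.sumElim (Sum.inl_injective.comp Sum.inr_injective)
      Sum.inr_injective
    intro a b
    simp
  have hEH : Eᴴ = (1 : Matrix _ _ ℂ).submatrix e id := by
    rw [hE_def, Matrix.conjTranspose_submatrix, Matrix.conjTranspose_one]
  have hFH : Fᴴ = (1 : Matrix _ _ ℂ).submatrix g id := by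
    rw [hF_def, Matrix.conjTranspose_submatrix, Matrix.conjTranspose_one]
  -- basic products
  have hEE : Eᴴ * E = 1 := by
    rw [hEH, hE_def, subone_mul, Matrix.submatrix_submatrix, Function.comp_id, Function.id_comp,
      Matrix.submatrix_one e he_inj]
  have hFF : Fᴴ * F = 1 := by
    rw [hFH, hF_def, subone_mul, Matrix.submatrix_submatrix, Function.comp_id, Function.id_comp,
      Matrix.submatrix_one g hg_inj]
  have hEF : Eᴴ * F = 0 := by
    rw [hEH, hF_def, subone_mul, Matrix.submatrix_submatrix, Function.comp_id, Function.id_comp]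
    ext i j
    rcases j with j | j <;> simp [Matrix.one_apply, he_def, hg_def]
  have hFE : Fᴴ * E = 0 := by
    have := congrArg Matrix.conjTranspose hEF
    simpa [Matrix.conjTranspose_mul] using this
  -- completeness :  E Eᴴ + F Fᴴ = 1
  have hEEFF : E * Eᴴ + F * Fᴴ = 1 := by
    classical
    set σ : (Fin t ⊕ (Fin r ⊕ Fin q)) ≃ ((Fin t ⊕ Fin r) ⊕ Fin q) :=
      (Equiv.sumAssoc (Fin t) (Fin r) (Fin q)).symm with hσ
    have hcols : fromCols E F = (1 : Matrix _ _ ℂ).submatrix id ⇑σ := by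
      ext i j
      rcases j with a | (b | c) <;> rfl
    have hrows : fromRows Eᴴ Fᴴ = (1 : Matrix _ _ ℂ).submatrix ⇑σ id := by
      ext i j
      rcases i with a | (b | c) <;> rw [hEH, hFH] <;> rfl
    have h1 : fromCols E F * fromRows Eᴴ Fᴴ = 1 := by
      rw [hcols, hrows, Matrix.submatrix_mul_equiv]
      simp
    calc E * Eᴴ + F * Fᴴ = fromCols E F * fromRows Eᴴ Fᴴ :=
          (Matrix.fromCols_mul_fromRows E F Eᴴ Fᴴ).symm
      _ = 1 := h1
  -- Et = E
  have hEt : Et = E := by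
    rw [hEt_def, hE_def]
    ext i j
    rcases i with (a | b) | c <;>
      simp [Matrix.one_apply, he_def, Matrix.fromRows_apply_inl, Matrix.fromRows_apply_inr,
        Matrix.submatrix_apply]
  -- invertibility of S
  have hSdet : IsUnit S.det := (Matrix.isUnit_iff_isUnit_det S).mp hS.isUnit
  have hSS : S * S⁻¹ = 1 := Matrix.mul_nonsing_inv S hSdet
  have hS'S : S⁻¹ * S = 1 := Matrix.nonsing_inv_mul S hSdet
  have hSinvH : S⁻¹ᴴ = S⁻¹ := by
    rw [Matrix.conjTranspose_nonsing_inv, hS.1.eq]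
  -- G and H and their invertibility
  have hGpd : (Eᴴ * (S⁻¹ * E)).PosDef := by
    rw [← Matrix.mul_assoc]; exact posDef_conj hS.inv E hEE
  have hHpd : (Fᴴ * (S * F)).PosDef := by
    rw [← Matrix.mul_assoc]; exact posDef_conj hS F hFF
  have hGdet : IsUnit (Eᴴ * (S⁻¹ * E)).det := (Matrix.isUnit_iff_isUnit_det _).mp hGpd.isUnit
  have hHdet : IsUnit (Fᴴ * (S * F)).det := (Matrix.isUnit_iff_isUnit_det _).mp hHpd.isUnit
  have hGu : (Eᴴ * (S⁻¹ * E)) * (Eᴴ * (S⁻¹ * E))⁻¹ = 1 := Matrix.mul_nonsing_inv _ hGdet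
  have hG'u : (Eᴴ * (S⁻¹ * E))⁻¹ * (Eᴴ * (S⁻¹ * E)) = 1 := Matrix.nonsing_inv_mul _ hGdet
  have hHu : (Fᴴ * (S * F)) * (Fᴴ * (S * F))⁻¹ = 1 := Matrix.mul_nonsing_inv _ hHdet
  have hH'u : (Fᴴ * (S * F))⁻¹ * (Fᴴ * (S * F)) = 1 := Matrix.nonsing_inv_mul _ hHdet
  -- normal-form rewrite rules
  have r1 : ∀ (m : Type) (W : Matrix (Fin t) m ℂ), Eᴴ * (E * W) = W :=
    fun m W => mul_mul_cancel hEE W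
  have r2 : ∀ (m : Type) (W : Matrix (Fin r ⊕ Fin q) m ℂ), Eᴴ * (F * W) = 0 :=
    fun m W => mul_mul_zero hEF W
  have r3 : ∀ (m : Type) (W : Matrix (Fin t) m ℂ), Fᴴ * (E * W) = 0 :=
    fun m W => mul_mul_zero hFE W
  have r4 : ∀ (m : Type) (W : Matrix (Fin r ⊕ Fin q) m ℂ), Fᴴ * (F * W) = W :=
    fun m W => mul_mul_cancel hFF W
  have r5 : ∀ (m : Type) (W : Matrix ((Fin t ⊕ Fin r) ⊕ Fin q) m ℂ), S * (S⁻¹ * W) = W :=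
    fun m W => mul_mul_cancel hSS W
  have r6 : ∀ (m : Type) (W : Matrix ((Fin t ⊕ Fin r) ⊕ Fin q) m ℂ), S⁻¹ * (S * W) = W :=
    fun m W => mul_mul_cancel hS'S W
  have r7 : ∀ (m : Type) (W : Matrix (Fin t) m ℂ),
      Eᴴ * (S⁻¹ * (E * ((Eᴴ * (S⁻¹ * E))⁻¹ * W))) = W := fun m W => by
    have := mul_mul_cancel hGu W
    simpa only [Matrix.mul_assoc] using this
  have r8 : ∀ (m : Type) (W : Matrix (Fin t) m ℂ),
      (Eᴴ * (S⁻¹ * E))⁻¹ * (Eᴴ * (S⁻¹ * (E * W))) = W := fun m W => by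
    have := mul_mul_cancel hG'u W
    simpa only [Matrix.mul_assoc] using this
  have r9 : ∀ (m : Type) (W : Matrix (Fin r ⊕ Fin q) m ℂ),
      Fᴴ * (S * (F * ((Fᴴ * (S * F))⁻¹ * W))) = W := fun m W => by
    have := mul_mul_cancel hHu W
    simpa only [Matrix.mul_assoc] using this
  have r10 : ∀ (m : Type) (W : Matrix (Fin r ⊕ Fin q) m ℂ),
      (Fᴴ * (S * F))⁻¹ * (Fᴴ * (S * (F * W))) = W := fun m W => by
    have := mul_mul_cancel hH'u W
    simpa only [Matrix.mul_assoc] using this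
  have b7 : Eᴴ * (S⁻¹ * (E * (Eᴴ * (S⁻¹ * E))⁻¹)) = 1 := by
    simpa only [Matrix.mul_assoc] using hGu
  have b9 : Fᴴ * (S * (F * (Fᴴ * (S * F))⁻¹)) = 1 := by
    simpa only [Matrix.mul_assoc] using hHu
  -- the key projection identity, via the auxiliary invertible matrix Q
  have hLSQ :
      (S⁻¹ * (E * ((Eᴴ * (S⁻¹ * E))⁻¹ * (Eᴴ * S⁻¹))) + F * ((Fᴴ * (S * F))⁻¹ * Fᴴ)) *
          (S * (S⁻¹ * (E * Eᴴ) + F * Fᴴ)) = S⁻¹ * (E * Eᴴ) + F * Fᴴ := by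
    simp only [Matrix.mul_add, Matrix.add_mul, Matrix.mul_assoc, r1, r2, r3, r4, r5, r6, r7, r8,
      r9, r10, Matrix.mul_zero, Matrix.zero_mul, Matrix.mul_one, Matrix.one_mul, add_zero,
      zero_add, hEE, hFF, hEF, hFE, hSS, hS'S]
  have hQH : (S⁻¹ * (E * Eᴴ) + F * Fᴴ)ᴴ = E * (Eᴴ * S⁻¹) + F * Fᴴ := by
    simp only [Matrix.conjTranspose_add, Matrix.conjTranspose_mul,
      Matrix.conjTranspose_conjTranspose, hSinvH, Matrix.mul_assoc]
  have hbig :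
      ((S⁻¹ * (E * Eᴴ) + F * Fᴴ)ᴴ * (S * (S⁻¹ * (E * Eᴴ) + F * Fᴴ))) *
        (E * ((Eᴴ * (S⁻¹ * E))⁻¹ * Eᴴ) + F * ((Fᴴ * (S * F))⁻¹ * Fᴴ)) = 1 := by
    rw [hQH]
    simp only [Matrix.mul_add, Matrix.add_mul, Matrix.mul_assoc, r1, r2, r3, r4, r5, r6, r7, r8,
      r9, r10, Matrix.mul_zero, Matrix.zero_mul, Matrix.mul_one, Matrix.one_mul, add_zero,
      zero_add, b7, b9, hEEFF]
  have hQdet : IsUnit (S⁻¹ * (E * Eᴴ) + F * Fᴴ).det := by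
    have h1 := Matrix.isUnit_det_of_right_inverse hbig
    rw [Matrix.det_mul, Matrix.det_mul] at h1
    exact isUnit_of_mul_isUnit_right (isUnit_of_mul_isUnit_right h1)
  have hQQ' : (S⁻¹ * (E * Eᴴ) + F * Fᴴ) * (S⁻¹ * (E * Eᴴ) + F * Fᴴ)⁻¹ = 1 :=
    Matrix.mul_nonsing_inv _ hQdet
  have hLS :
      (S⁻¹ * (E * ((Eᴴ * (S⁻¹ * E))⁻¹ * (Eᴴ * S⁻¹))) + F * ((Fᴴ * (S * F))⁻¹ * Fᴴ)) * S = 1 := by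
    have h2 : (S⁻¹ * (E * ((Eᴴ * (S⁻¹ * E))⁻¹ * (Eᴴ * S⁻¹))) + F * ((Fᴴ * (S * F))⁻¹ * Fᴴ)) *
        (S * (S⁻¹ * (E * Eᴴ) + F * Fᴴ)) * (S⁻¹ * (E * Eᴴ) + F * Fᴴ)⁻¹ = 1 := by
      rw [hLSQ, hQQ']
    calc (S⁻¹ * (E * ((Eᴴ * (S⁻¹ * E))⁻¹ * (Eᴴ * S⁻¹))) + F * ((Fᴴ * (S * F))⁻¹ * Fᴴ)) * S
        = (S⁻¹ * (E * ((Eᴴ * (S⁻¹ * E))⁻¹ * (Eᴴ * S⁻¹))) + F * ((Fᴴ * (S * F))⁻¹ * Fᴴ)) * S *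
            ((S⁻¹ * (E * Eᴴ) + F * Fᴴ) * (S⁻¹ * (E * Eᴴ) + F * Fᴴ)⁻¹) := by
          rw [hQQ', Matrix.mul_one]
      _ = (S⁻¹ * (E * ((Eᴴ * (S⁻¹ * E))⁻¹ * (Eᴴ * S⁻¹))) + F * ((Fᴴ * (S * F))⁻¹ * Fᴴ)) *
            (S * (S⁻¹ * (E * Eᴴ) + F * Fᴴ)) * (S⁻¹ * (E * Eᴴ) + F * Fᴴ)⁻¹ := by
          simp only [Matrix.mul_assoc]
      _ = 1 := h2
  have hL : S⁻¹ =
      S⁻¹ * (E * ((Eᴴ * (S⁻¹ * E))⁻¹ * (Eᴴ * S⁻¹))) + F * ((Fᴴ * (S * F))⁻¹ * Fᴴ) :=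
    Matrix.inv_eq_left_inv hLS
  -- facts about Shalf
  have hShalfinv2 : Shalf⁻¹ * Shalf⁻¹ = S⁻¹ := by
    rw [← Matrix.mul_inv_rev, hShalf_sq]
  have hShalfinvH : Shalf⁻¹ᴴ = Shalf⁻¹ := by
    rw [Matrix.conjTranspose_nonsing_inv, hShalfH]
  have r11 : ∀ (m : Type) (W : Matrix ((Fin t ⊕ Fin r) ⊕ Fin q) m ℂ),
      Shalf⁻¹ * (Shalf⁻¹ * W) = S⁻¹ * W := fun m W => by
    rw [← Matrix.mul_assoc, hShalfinv2]
  have hA0eq : A0 = Shalf⁻¹ * E := by rw [hA0_def, hEt]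
  -- reduction of the whitened quadratic form
  have hA0proj : projPerp A0 =
      1 - Shalf⁻¹ * E * ((Eᴴ * (S⁻¹ * E))⁻¹ * (Eᴴ * Shalf⁻¹)) := by
    rw [projPerp, proj, hA0eq, Matrix.conjTranspose_mul, hShalfinvH]
    have hmid : Eᴴ * Shalf⁻¹ * (Shalf⁻¹ * E) = Eᴴ * (S⁻¹ * E) := by
      simp only [Matrix.mul_assoc, r11]
    rw [hmid, Matrix.mul_assoc]
  have hstep : (Shalf⁻¹ * X)ᴴ * projPerp A0 * (Shalf⁻¹ * X) =
      Xᴴ * (S⁻¹ * X) - Xᴴ * (S⁻¹ * (E * ((Eᴴ * (S⁻¹ * E))⁻¹ * (Eᴴ * (S⁻¹ * X))))) := by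
    rw [hA0proj, Matrix.conjTranspose_mul, hShalfinvH]
    simp only [Matrix.mul_sub, Matrix.sub_mul, Matrix.mul_one, Matrix.one_mul,
      Matrix.mul_assoc, r11]
  have hkey2 : Xᴴ * (S⁻¹ * X) - Xᴴ * (S⁻¹ * (E * ((Eᴴ * (S⁻¹ * E))⁻¹ * (Eᴴ * (S⁻¹ * X))))) =
      Xᴴ * (F * ((Fᴴ * (S * F))⁻¹ * (Fᴴ * X))) := by
    have h := congrArg (fun Z : Matrix _ _ ℂ => Xᴴ * (Z * X)) hL
    simp only [Matrix.mul_add, Matrix.add_mul, Matrix.mul_assoc] at h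
    rw [h]
    abel
  -- block structure of H = Fᴴ S F and of Fᴴ X
  have hHsub : Fᴴ * (S * F) = S.submatrix g g := by
    rw [← Matrix.mul_assoc, hFH, subone_mul, hF_def, mul_subone, Matrix.submatrix_submatrix,
      Function.comp_id, Function.id_comp]
  have hHblocks : Fᴴ * (S * F) = fromBlocks S22 S23 S32 S33 := by
    rw [hHsub, hS22_def, hS23_def, hS32_def, hS33_def]
    ext i j
    rcases i with i | i <;> rcases j with j | j <;> rfl
  have hFX : Fᴴ * X = fromRows X2 X3 := by
    rw [hFH, subone_mul, hX2_def, hX3_def]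
    ext i j
    rcases i with i | i <;> rfl
  have hXF : Xᴴ * F = fromCols X2ᴴ X3ᴴ := by
    have h1 := congrArg Matrix.conjTranspose hFX
    rw [Matrix.conjTranspose_mul, Matrix.conjTranspose_conjTranspose,
      Matrix.conjTranspose_fromRows_eq_fromCols_conjTranspose] at h1
    exact h1
  -- hermitian facts about the blocks
  have hS33H : S33ᴴ = S33 := by
    rw [hS33_def, Matrix.conjTranspose_submatrix, hS.1.eq]
  have hS23H : S23ᴴ = S32 := by
    rw [hS23_def, hS32_def, Matrix.conjTranspose_submatrix, hS.1.eq]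
  -- S33 is positive definite
  set E3 : Matrix ((Fin t ⊕ Fin r) ⊕ Fin q) (Fin q) ℂ :=
    (1 : Matrix ((Fin t ⊕ Fin r) ⊕ Fin q) ((Fin t ⊕ Fin r) ⊕ Fin q) ℂ).submatrix id Sum.inr
    with hE3_def
  have hE3 : E3ᴴ = (1 : Matrix ((Fin t ⊕ Fin r) ⊕ Fin q) ((Fin t ⊕ Fin r) ⊕ Fin q) ℂ).submatrix
      Sum.inr id := by
    rw [hE3_def, Matrix.conjTranspose_submatrix, Matrix.conjTranspose_one]
  have hS33pd : S33.PosDef := by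
    have h1 : E3ᴴ * E3 = 1 := by
      rw [hE3, hE3_def, subone_mul, Matrix.submatrix_submatrix, Function.comp_id,
        Function.id_comp, Matrix.submatrix_one _ Sum.inr_injective]
    have h2 := posDef_conj hS _ h1
    have h3 : E3ᴴ * S * E3 = S33 := by
      rw [hE3, hE3_def, subone_mul, mul_subone, Matrix.submatrix_submatrix, Function.comp_id,
        Function.id_comp, hS33_def]
    rwa [h3] at h2
  have hS33u : IsUnit S33 := hS33pd.isUnit
  have hS33det : IsUnit S33.det := (Matrix.isUnit_iff_isUnit_det _).mp hS33u
  have h33u : S33 * S33⁻¹ = 1 := Matrix.mul_nonsing_inv _ hS33det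
  -- S2d3 is invertible, via the determinant of the block matrix
  haveI : Invertible S33 := S33.invertibleOfIsUnitDet hS33det
  have hdetH : (Fᴴ * (S * F)).det = S33.det * S2d3.det := by
    rw [hHblocks, Matrix.det_fromBlocks₂₂, Matrix.invOf_eq_nonsing_inv, hS2d3_def]
  have hS2d3det : IsUnit S2d3.det := by
    have := (Matrix.isUnit_iff_isUnit_det _).mp hHpd.isUnit
    rw [hdetH] at this
    exact isUnit_of_mul_isUnit_right this
  have hS2d3u : IsUnit S2d3 := (Matrix.isUnit_iff_isUnit_det _).mpr hS2d3det
  have h2d3u : S2d3 * S2d3⁻¹ = 1 := Matrix.mul_nonsing_inv _ hS2d3det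
  have r33 : ∀ (m : Type) (W : Matrix (Fin q) m ℂ), S33 * (S33⁻¹ * W) = W :=
    fun m W => mul_mul_cancel h33u W
  have r2d3 : ∀ (m : Type) (W : Matrix (Fin r) m ℂ), S2d3 * (S2d3⁻¹ * W) = W :=
    fun m W => mul_mul_cancel h2d3u W
  -- the explicit inverse of the block matrix
  have hHK : fromBlocks S22 S23 S32 S33 *
      fromBlocks S2d3⁻¹ (-(S2d3⁻¹ * (S23 * S33⁻¹))) (-(S33⁻¹ * (S32 * S2d3⁻¹)))
        (S33⁻¹ + S33⁻¹ * (S32 * (S2d3⁻¹ * (S23 * S33⁻¹)))) = 1 := by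
    rw [Matrix.fromBlocks_multiply, ← Matrix.fromBlocks_one, Matrix.fromBlocks_inj]
    refine ⟨?_, ?_, ?_, ?_⟩
    · -- (1,1)
      have hkey : S22 * S2d3⁻¹ - S23 * (S33⁻¹ * (S32 * S2d3⁻¹)) = 1 := by
        calc S22 * S2d3⁻¹ - S23 * (S33⁻¹ * (S32 * S2d3⁻¹))
            = (S22 - S23 * S33⁻¹ * S32) * S2d3⁻¹ := by
              simp only [Matrix.sub_mul, Matrix.mul_assoc]
          _ = 1 := by rw [← hS2d3_def, h2d3u]
      simpa only [Matrix.mul_neg, ← sub_eq_add_neg] using hkey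
    · -- (1,2)
      have hkey : S22 * (S2d3⁻¹ * (S23 * S33⁻¹)) -
          S23 * (S33⁻¹ * (S32 * (S2d3⁻¹ * (S23 * S33⁻¹)))) = S23 * S33⁻¹ := by
        calc S22 * (S2d3⁻¹ * (S23 * S33⁻¹)) -
            S23 * (S33⁻¹ * (S32 * (S2d3⁻¹ * (S23 * S33⁻¹))))
            = (S22 - S23 * S33⁻¹ * S32) * (S2d3⁻¹ * (S23 * S33⁻¹)) := by
              simp only [Matrix.sub_mul, Matrix.mul_assoc]
          _ = S23 * S33⁻¹ := by rw [← hS2d3_def, r2d3]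
      rw [Matrix.mul_neg, Matrix.mul_add]
      have habel : -(S22 * (S2d3⁻¹ * (S23 * S33⁻¹))) +
          (S23 * S33⁻¹ + S23 * (S33⁻¹ * (S32 * (S2d3⁻¹ * (S23 * S33⁻¹))))) =
          S23 * S33⁻¹ - (S22 * (S2d3⁻¹ * (S23 * S33⁻¹)) -
            S23 * (S33⁻¹ * (S32 * (S2d3⁻¹ * (S23 * S33⁻¹))))) := by abel
      rw [habel, hkey, sub_self]
    · -- (2,1)
      rw [Matrix.mul_neg, r33]
      abel
    · -- (2,2)
      rw [Matrix.mul_neg, Matrix.mul_add, r33, h33u]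
      abel
  have hHinvK : (Fᴴ * (S * F))⁻¹ =
      fromBlocks S2d3⁻¹ (-(S2d3⁻¹ * (S23 * S33⁻¹))) (-(S33⁻¹ * (S32 * S2d3⁻¹)))
        (S33⁻¹ + S33⁻¹ * (S32 * (S2d3⁻¹ * (S23 * S33⁻¹)))) := by
    rw [hHblocks]
    exact Matrix.inv_eq_right_inv hHK
  -- conjugate-transpose of X2d3
  have hS33invH : S33⁻¹ᴴ = S33⁻¹ := by
    rw [Matrix.conjTranspose_nonsing_inv, hS33H]
  have hX2d3H : X2d3ᴴ = X2ᴴ - X3ᴴ * (S33⁻¹ * S32) := by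
    rw [hX2d3_def, Matrix.conjTranspose_sub, Matrix.conjTranspose_mul,
      Matrix.conjTranspose_mul, hS33invH, hS23H]
  -- final assembly
  refine ⟨hS33u, hS2d3u, ?_⟩
  rw [hstep, hkey2, hHinvK, hFX]
  simp only [← Matrix.mul_assoc]
  rw [hXF, Matrix.fromCols_mul_fromBlocks, Matrix.fromCols_mul_fromRows, hX2d3H, hX2d3_def]
  simp only [Matrix.mul_add, Matrix.add_mul, Matrix.mul_sub, Matrix.sub_mul, Matrix.mul_neg,
    Matrix.neg_mul, Matrix.mul_assoc, sub_eq_add_neg, neg_add]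
  abel
end
end

section
/- Let t, r, q, M be positive integers, N = t + r + q, and let S ∈ ℂ^{N×N} be Hermitian positive definite with 3×3 block partition S = (S_{ij})_{i,j=1,2,3} conformal to (t, r, q). Let X ∈ ℂ^{N×M} with row blocks X₁ ∈ ℂ^{t×M}, X₂ ∈ ℂ^{r×M}, X₃ ∈ ℂ^{q×M}. Let A be the first t + r columns of I_N and A₁ = S^{-1/2}A. Then S₃₃ is invertible and (S^{-1/2}X)† P_{A₁}^⊥ (S^{-1/2}X) = X₃† S₃₃⁻¹ X₃. -/
open Matrix
open scoped ComplexOrder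

noncomputable section

lemma posDef_submatrix_inr' {n₁ n₂ : Type*} [Fintype n₁] [Fintype n₂] [DecidableEq n₁]
    [DecidableEq n₂] {S : Matrix (n₁ ⊕ n₂) (n₁ ⊕ n₂) ℂ} (hS : S.PosDef) :
    (S.submatrix Sum.inr Sum.inr).PosDef := by
  refine posDef_iff_dotProduct_mulVec.mpr ⟨hS.1.submatrix _, fun x hx => ?_⟩
  have h0 : Sum.elim (0 : n₁ → ℂ) x ≠ 0 := by
    intro h; apply hx; funext i; exact congrFun h (Sum.inr i)
  have key : star x ⬝ᵥ (S.submatrix Sum.inr Sum.inr) *ᵥ x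
      = star (Sum.elim 0 x) ⬝ᵥ S *ᵥ (Sum.elim 0 x) := by
    simp [dotProduct, mulVec, Fintype.sum_sum_type]
  rw [key]; exact hS.dotProduct_mulVec_pos h0

lemma posDef_submatrix_inl' {n₁ n₂ : Type*} [Fintype n₁] [Fintype n₂] [DecidableEq n₁]
    [DecidableEq n₂] {S : Matrix (n₁ ⊕ n₂) (n₁ ⊕ n₂) ℂ} (hS : S.PosDef) :
    (S.submatrix Sum.inl Sum.inl).PosDef := by
  refine posDef_iff_dotProduct_mulVec.mpr ⟨hS.1.submatrix _, fun x hx => ?_⟩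
  have h0 : Sum.elim x (0 : n₂ → ℂ) ≠ 0 := by
    intro h; apply hx; funext i; exact congrFun h (Sum.inl i)
  have key : star x ⬝ᵥ (S.submatrix Sum.inl Sum.inl) *ᵥ x
      = star (Sum.elim x 0) ⬝ᵥ S *ᵥ (Sum.elim x 0) := by
    simp [dotProduct, mulVec, Fintype.sum_sum_type]
  rw [key]; exact hS.dotProduct_mulVec_pos h0

lemma fromRowsOne_ct_mul {n₁ n₂ m : Type*} [Fintype n₁] [Fintype n₂] [Fintype m]
    [DecidableEq n₁] [DecidableEq n₂] (Y : Matrix (n₁ ⊕ n₂) m ℂ) :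
    (fromRows (1 : Matrix n₁ n₁ ℂ) (0 : Matrix n₂ n₁ ℂ))ᴴ * Y = Y.toRows₁ := by
  rw [conjTranspose_fromRows_eq_fromCols_conjTranspose, ← fromRows_toRows Y,
    fromCols_mul_fromRows]
  simp

lemma fromRowsTwo_ct_mul {n₁ n₂ m : Type*} [Fintype n₁] [Fintype n₂] [Fintype m]
    [DecidableEq n₁] [DecidableEq n₂] (Y : Matrix (n₁ ⊕ n₂) m ℂ) :
    (fromRows (0 : Matrix n₁ n₂ ℂ) (1 : Matrix n₂ n₂ ℂ))ᴴ * Y = Y.toRows₂ := by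
  rw [conjTranspose_fromRows_eq_fromCols_conjTranspose, ← fromRows_toRows Y,
    fromCols_mul_fromRows]
  simp

/-- Eq. (39) of the paper: with `A₁ = S^{-1/2} A` and `A` the first `t + r` columns of `I_N`,
`(S^{-1/2}X)ᴴ P_{A₁}^⊥ (S^{-1/2}X) = X₃ᴴ S₃₃⁻¹ X₃`. -/
theorem whitened_quadratic_form_H1
    (t r q M : ℕ) (ht : 0 < t) (hr : 0 < r) (hq : 0 < q) (hM : 0 < M)
    (S : Matrix ((Fin t ⊕ Fin r) ⊕ Fin q) ((Fin t ⊕ Fin r) ⊕ Fin q) ℂ) (hS : S.PosDef)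
    (X : Matrix ((Fin t ⊕ Fin r) ⊕ Fin q) (Fin M) ℂ) :
    let S33 : Matrix (Fin q) (Fin q) ℂ := S.submatrix Sum.inr Sum.inr
    let X3 : Matrix (Fin q) (Fin M) ℂ := X.submatrix Sum.inr id
    -- `A` : first `t + r` columns of `I_N`
    let A : Matrix ((Fin t ⊕ Fin r) ⊕ Fin q) (Fin t ⊕ Fin r) ℂ := fromRows 1 0
    let Shalf : Matrix ((Fin t ⊕ Fin r) ⊕ Fin q) ((Fin t ⊕ Fin r) ⊕ Fin q) ℂ :=
      hS.posSemidef.1.eigenvectorUnitary.1 *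
        diagonal ((↑) ∘ Real.sqrt ∘ hS.posSemidef.1.eigenvalues) *
        (star hS.posSemidef.1.eigenvectorUnitary : Matrix ((Fin t ⊕ Fin r) ⊕ Fin q) ((Fin t ⊕ Fin r) ⊕ Fin q) ℂ)
    let A1 : Matrix ((Fin t ⊕ Fin r) ⊕ Fin q) (Fin t ⊕ Fin r) ℂ := Shalf⁻¹ * A
    IsUnit S33 ∧
      (Shalf⁻¹ * X)ᴴ * projPerp A1 * (Shalf⁻¹ * X) = X3ᴴ * S33⁻¹ * X3 := by
  intro S33 X3 A Shalf A1
  have hAdef : A = fromRows 1 0 := rfl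
  -- basic facts about the square root
  have hH : Shalf * Shalf = S := by
    have hU : (star hS.posSemidef.1.eigenvectorUnitary : Matrix ((Fin t ⊕ Fin r) ⊕ Fin q)
        ((Fin t ⊕ Fin r) ⊕ Fin q) ℂ) * hS.posSemidef.1.eigenvectorUnitary.1 = 1 :=
      Unitary.coe_star_mul_self _
    have hD : diagonal (((↑) ∘ Real.sqrt ∘ hS.posSemidef.1.eigenvalues) :
          (Fin t ⊕ Fin r) ⊕ Fin q → ℂ) *
        diagonal ((↑) ∘ Real.sqrt ∘ hS.posSemidef.1.eigenvalues) =
        diagonal (RCLike.ofReal ∘ hS.posSemidef.1.eigenvalues) := by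
      rw [diagonal_mul_diagonal]; congr 1; funext i
      simp only [Function.comp_apply, ← Complex.ofReal_mul,
        Real.mul_self_sqrt (hS.posSemidef.eigenvalues_nonneg i)]
      rfl
    have e : Shalf * Shalf = hS.posSemidef.1.eigenvectorUnitary.1 *
        (diagonal ((↑) ∘ Real.sqrt ∘ hS.posSemidef.1.eigenvalues) *
          ((star hS.posSemidef.1.eigenvectorUnitary : Matrix ((Fin t ⊕ Fin r) ⊕ Fin q)
            ((Fin t ⊕ Fin r) ⊕ Fin q) ℂ) * hS.posSemidef.1.eigenvectorUnitary.1) *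
          diagonal ((↑) ∘ Real.sqrt ∘ hS.posSemidef.1.eigenvalues)) *
        (star hS.posSemidef.1.eigenvectorUnitary : Matrix ((Fin t ⊕ Fin r) ⊕ Fin q)
            ((Fin t ⊕ Fin r) ⊕ Fin q) ℂ) := by
      simp only [Shalf, Matrix.mul_assoc]
    rw [e, hU, Matrix.mul_one, hD]
    conv_rhs => rw [hS.posSemidef.1.spectral_theorem]
    rfl
  have hHherm : Shalfᴴ = Shalf := by
    simp only [Shalf, conjTranspose_mul, diagonal_conjTranspose, Matrix.mul_assoc]
    simp [Matrix.mul_assoc, Matrix.star_eq_conjTranspose]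
    rw [show star (Complex.ofReal ∘ Real.sqrt ∘ hS.posSemidef.1.eigenvalues) =
      Complex.ofReal ∘ Real.sqrt ∘ hS.posSemidef.1.eigenvalues from by funext i; simp]
  have hSdet : IsUnit S.det := isUnit_iff_ne_zero.2 (ne_of_gt hS.det_pos)
  have hHdet : IsUnit Shalf.det := by
    have hmul : Shalf.det * Shalf.det = S.det := by rw [← det_mul, hH]
    exact isUnit_of_mul_isUnit_left (hmul ▸ hSdet)
  have hHinv_herm : Shalf⁻¹ᴴ = Shalf⁻¹ := by rw [conjTranspose_nonsing_inv, hHherm]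
  have hSinv : Shalf⁻¹ * Shalf⁻¹ = S⁻¹ := by rw [← Matrix.mul_inv_rev, hH]
  -- block-selection matrices
  set B : Matrix ((Fin t ⊕ Fin r) ⊕ Fin q) (Fin q) ℂ := fromRows 0 1 with hBdef
  have hAB : Aᴴ * B = 0 := by
    rw [fromRowsOne_ct_mul]; simp [hBdef, toRows₁_fromRows]
  have hBA : Bᴴ * A = 0 := by
    rw [fromRowsTwo_ct_mul, hAdef, toRows₂_fromRows]
  have hBX : Bᴴ * X = X3 := by rw [fromRowsTwo_ct_mul]; rfl
  have hXB : Xᴴ * B = X3ᴴ := by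
    rw [← hBX, conjTranspose_mul, conjTranspose_conjTranspose]
  have hBSB : Bᴴ * (S * B) = S33 := by
    have hSB : S * B = S.submatrix id Sum.inr := by
      ext i j
      simp [hBdef, Matrix.mul_apply, Fintype.sum_sum_type, Matrix.one_apply]
    rw [hSB, fromRowsTwo_ct_mul]
    rfl
  have hASA : Aᴴ * (S⁻¹ * A) = (S⁻¹).submatrix Sum.inl Sum.inl := by
    have hSA : S⁻¹ * A = (S⁻¹).submatrix id Sum.inl := by
      ext i j
      simp [hAdef, Matrix.mul_apply, Fintype.sum_sum_type, Matrix.one_apply]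
    rw [hSA, fromRowsOne_ct_mul]
    rfl
  -- positive definiteness of the two Gram matrices
  have hG_pd : ((S⁻¹).submatrix Sum.inl Sum.inl).PosDef := posDef_submatrix_inl' hS.inv
  have hS33_pd : S33.PosDef := posDef_submatrix_inr' hS
  refine ⟨hS33_pd.isUnit, ?_⟩
  set B1 : Matrix ((Fin t ⊕ Fin r) ⊕ Fin q) (Fin q) ℂ := Shalf * B with hB1def
  -- Gram matrices
  have hA1A1 : A1ᴴ * A1 = (S⁻¹).submatrix Sum.inl Sum.inl := by
    show (Shalf⁻¹ * A)ᴴ * (Shalf⁻¹ * A) = _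
    rw [conjTranspose_mul, hHinv_herm, Matrix.mul_assoc, ← Matrix.mul_assoc Shalf⁻¹,
      hSinv, ← hASA]
  have hB1B1 : B1ᴴ * B1 = S33 := by
    rw [hB1def, conjTranspose_mul, hHherm, Matrix.mul_assoc, ← Matrix.mul_assoc Shalf,
      hH, ← hBSB]
  have hA1B1 : A1ᴴ * B1 = 0 := by
    show (Shalf⁻¹ * A)ᴴ * (Shalf * B) = 0
    rw [conjTranspose_mul, hHinv_herm, Matrix.mul_assoc,
      Matrix.nonsing_inv_mul_cancel_left _ _ hHdet, hAB]
  have hB1A1 : B1ᴴ * A1 = 0 := by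
    show (Shalf * B)ᴴ * (Shalf⁻¹ * A) = 0
    rw [conjTranspose_mul, hHherm, Matrix.mul_assoc,
      Matrix.mul_nonsing_inv_cancel_left _ _ hHdet, hBA]
  have hGdet : IsUnit ((S⁻¹).submatrix Sum.inl Sum.inl).det :=
    (Matrix.isUnit_iff_isUnit_det _).1 hG_pd.isUnit
  have hS33det : IsUnit S33.det := (Matrix.isUnit_iff_isUnit_det _).1 hS33_pd.isUnit
  -- projector actions
  have hPA1 : proj A1 * A1 = A1 := by
    rw [proj, Matrix.mul_assoc, Matrix.mul_assoc, hA1A1,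
      Matrix.nonsing_inv_mul _ (hA1A1 ▸ hGdet), Matrix.mul_one]
  have hPB1 : proj A1 * B1 = 0 := by
    rw [proj, Matrix.mul_assoc, Matrix.mul_assoc, hA1B1, Matrix.mul_zero, Matrix.mul_zero]
  have hQA1 : proj B1 * A1 = 0 := by
    rw [proj, Matrix.mul_assoc, Matrix.mul_assoc, hB1A1, Matrix.mul_zero, Matrix.mul_zero]
  have hQB1 : proj B1 * B1 = B1 := by
    rw [proj, Matrix.mul_assoc, Matrix.mul_assoc, hB1B1,
      Matrix.nonsing_inv_mul _ (hB1B1 ▸ hS33det), Matrix.mul_one]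
  -- the combined matrix W is invertible
  set W : Matrix ((Fin t ⊕ Fin r) ⊕ Fin q) ((Fin t ⊕ Fin r) ⊕ Fin q) ℂ :=
    fromCols A1 B1 with hWdef
  have hWHW : Wᴴ * W = fromBlocks ((S⁻¹).submatrix Sum.inl Sum.inl) 0 0 S33 := by
    rw [hWdef, conjTranspose_fromCols_eq_fromRows_conjTranspose, fromRows_mul_fromCols,
      hA1A1, hB1B1, hA1B1, hB1A1]
  have hWdet : IsUnit W.det := by
    have h1 : Wᴴ.det * W.det = ((S⁻¹).submatrix Sum.inl Sum.inl).det * S33.det := by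
      rw [← det_mul, hWHW, det_fromBlocks_zero₂₁]
    exact isUnit_of_mul_isUnit_right (h1 ▸ (hGdet.mul hS33det))
  -- the key projector identity : 1 - P_{A1} = P_{B1}
  have hzero : (1 - proj A1 - proj B1) * W = 0 := by
    rw [hWdef, mul_fromCols]
    rw [Matrix.sub_mul, Matrix.sub_mul, Matrix.sub_mul, Matrix.sub_mul, Matrix.one_mul,
      Matrix.one_mul, hPA1, hPB1, hQA1, hQB1]
    simp [fromCols_zero]
  have hproj : 1 - proj A1 = proj B1 := by
    have h2 : (1 - proj A1 - proj B1) = 0 := by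
      have := congrArg (· * W⁻¹) hzero
      simpa [Matrix.mul_assoc, Matrix.mul_nonsing_inv _ hWdet] using this
    have := sub_eq_zero.1 h2
    linear_combination (norm := noncomm_ring) this
  -- final computation
  rw [projPerp, hproj, proj, hB1B1]
  rw [conjTranspose_mul, hHinv_herm, hB1def, conjTranspose_mul, hHherm]
  simp only [Matrix.mul_assoc]
  rw [Matrix.nonsing_inv_mul_cancel_left _ _ hHdet, Matrix.mul_nonsing_inv_cancel_left _ _ hHdet,
    hBX]
  rw [← Matrix.mul_assoc Xᴴ B, hXB]
end
end

section
/- Let S ∈ ℂ^{N×N} be Hermitian positive definite, z ∈ ℂ^N, and A ∈ ℂ^{N×r} of full column rank (so A† S⁻¹ A is invertible). Set S₀ = S + z z†. Then S₀ is Hermitian positive definite and z† S⁻¹ A (A† S⁻¹ A)⁻¹ A† S₀⁻¹ z = [ z† S⁻¹ A (A† S⁻¹ A)⁻¹ A† S⁻¹ z ] / (1 + z† S⁻¹ z). In particular this quantity is real, so the Gradient statistic K·Re{z† S⁻¹ A (A† S⁻¹ A)⁻¹ A† S₀⁻¹ z} for adaptive vector-subspace detection of a point-like target is K times Kelly's GLR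 ratio η = z₁† P_{A₁} z₁ / (1 + z₁† z₁) with z₁ = S^{-1/2}z and A₁ = S^{-1/2}A; hence the Gradient test is statistically equivalent to Kelly's GLRT in this scenario. -/
open Matrix
open scoped ComplexOrder

noncomputable section

theorem aux_vecMulVec_posSemidef {N : ℕ} (z : Fin N → ℂ) :
    (vecMulVec z (star z)).PosSemidef := by
  constructor
  · ext i j
    simp [conjTranspose_apply, vecMulVec_apply, mul_comm]
  · intro x
    have h : star x ⬝ᵥ (vecMulVec z (star z)) *ᵥ x
        = star (star z ⬝ᵥ x) * (star z ⬝ᵥ x) := by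
      simp only [mulVec, vecMulVec_apply, dotProduct, star_sum, star_mul',
        Finset.mul_sum, Finset.sum_mul, Pi.star_apply, star_star]
      rw [Finset.sum_comm]
      refine Finset.sum_congr rfl fun i _ => Finset.sum_congr rfl fun j _ => by ring
    exact (posSemidef_vecMulVec_self_star z).2 x

set_option maxHeartbeats 1000000 in
/-- Eq. (GT (vector subspace)) of the paper: with `S₀ = S + z zᴴ`,
`zᴴ S⁻¹ A (Aᴴ S⁻¹ A)⁻¹ Aᴴ S₀⁻¹ z = [zᴴ S⁻¹ A (Aᴴ S⁻¹ A)⁻¹ Aᴴ S⁻¹ z] / (1 + zᴴ S⁻¹ z)`; in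
particular the quantity is real and the Gradient statistic is `K` times Kelly's GLR ratio
`η = z₁ᴴ P_{A₁} z₁ / (1 + z₁ᴴ z₁)` — the Gradient test is statistically equivalent to
Kelly's GLRT for point-like targets. -/
theorem gradient_equals_kelly_glr_pointlike
    (N r : ℕ) (hN : 0 < N) (hr : 0 < r)
    (S : Matrix (Fin N) (Fin N) ℂ) (hS : S.PosDef)
    (z : Fin N → ℂ)
    (A : Matrix (Fin N) (Fin r) ℂ) (hA : A.rank = r) :
    let S0 : Matrix (Fin N) (Fin N) ℂ := S + vecMulVec z (star z)
    let g : ℂ := star z ⬝ᵥ ((S⁻¹ * A * (Aᴴ * S⁻¹ * A)⁻¹ * Aᴴ * S0⁻¹) *ᵥ z)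
    let Shalf : Matrix (Fin N) (Fin N) ℂ := (hS.posSemidef.1.eigenvectorUnitary : Matrix (Fin N) (Fin N) ℂ) *
      diagonal ((↑) ∘ Real.sqrt ∘ hS.posSemidef.1.eigenvalues) *
      (star hS.posSemidef.1.eigenvectorUnitary : Matrix (Fin N) (Fin N) ℂ)
    let z1 : Fin N → ℂ := Shalf⁻¹ *ᵥ z
    let A1 : Matrix (Fin N) (Fin r) ℂ := Shalf⁻¹ * A
    let η : ℂ := (star z1 ⬝ᵥ (proj A1 *ᵥ z1)) / (1 + star z1 ⬝ᵥ z1)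
    S0.PosDef ∧
      g = (star z ⬝ᵥ ((S⁻¹ * A * (Aᴴ * S⁻¹ * A)⁻¹ * Aᴴ * S⁻¹) *ᵥ z)) /
            (1 + star z ⬝ᵥ (S⁻¹ *ᵥ z)) ∧
      g.im = 0 ∧
      ∀ Kc : ℝ, ((Kc * g.re : ℝ) : ℂ) = (Kc : ℂ) * η := by
  intro S0 g Shalf z1 A1 η
  have hS0 : S0.PosDef := hS.add_posSemidef (aux_vecMulVec_posSemidef z)
  have hSinv : (S⁻¹).PosDef := hS.inv
  set c : ℂ := star z ⬝ᵥ (S⁻¹ *ᵥ z) with hc_def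
  have hc : (0 : ℂ) ≤ c := hSinv.posSemidef.dotProduct_mulVec_nonneg z
  have hc_im : c.im = 0 := by
    have := (Complex.le_def.mp hc).2
    simpa using this.symm
  have hc_re : 0 ≤ c.re := by
    have := (Complex.le_def.mp hc).1
    simpa using this
  have hd : (1 : ℂ) + c ≠ 0 := by
    intro h
    have : ((1 : ℂ) + c).re = 0 := by rw [h]; simp
    simp only [Complex.add_re, Complex.one_re] at this
    linarith
  -- key Sherman–Morrison-type fact applied to z
  have hvm0 : ∀ w : Fin N → ℂ, (vecMulVec z (star z)) *ᵥ w = (star z ⬝ᵥ w) • z := by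
    intro w
    funext i
    simp only [mulVec, vecMulVec_apply, dotProduct, Pi.smul_apply, smul_eq_mul,
      Finset.sum_mul]
    exact Finset.sum_congr rfl fun j _ => by ring
  have hvm : (vecMulVec z (star z)) *ᵥ (S⁻¹ *ᵥ z) = c • z := hvm0 _
  letI := hS.isUnit.invertible
  letI := hS0.isUnit.invertible
  have h1 : S0 *ᵥ (S⁻¹ *ᵥ z) = (1 + c) • z := by
    show (S + vecMulVec z (star z)) *ᵥ (S⁻¹ *ᵥ z) = (1 + c) • z
    rw [add_mulVec, mulVec_mulVec, Matrix.mul_inv_of_invertible, one_mulVec, hvm,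
      add_smul, one_smul]
  have hkey : S0⁻¹ *ᵥ z = (1 + c)⁻¹ • (S⁻¹ *ᵥ z) := by
    have h2 : S⁻¹ *ᵥ z = (1 + c) • (S0⁻¹ *ᵥ z) := by
      calc S⁻¹ *ᵥ z = S0⁻¹ *ᵥ (S0 *ᵥ (S⁻¹ *ᵥ z)) := by
            rw [mulVec_mulVec, Matrix.inv_mul_of_invertible, one_mulVec]
        _ = S0⁻¹ *ᵥ ((1 + c) • z) := by rw [h1]
        _ = (1 + c) • (S0⁻¹ *ᵥ z) := mulVec_smul _ _ _
    rw [h2, smul_smul, inv_mul_cancel₀ hd, one_smul]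
  set B : Matrix (Fin N) (Fin N) ℂ := S⁻¹ * A * (Aᴴ * S⁻¹ * A)⁻¹ * Aᴴ with hB_def
  set num : ℂ := star z ⬝ᵥ ((B * S⁻¹) *ᵥ z) with hnum_def
  have hg : g = (1 + c)⁻¹ * num := by
    have e1 : (B * S0⁻¹) *ᵥ z = (1 + c)⁻¹ • ((B * S⁻¹) *ᵥ z) := by
      rw [← mulVec_mulVec, hkey, mulVec_smul, mulVec_mulVec]
    show star z ⬝ᵥ ((B * S0⁻¹) *ᵥ z) = (1 + c)⁻¹ * num
    rw [e1, dotProduct_smul, smul_eq_mul, hnum_def]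
  have hgoal2 : g = num / (1 + c) := by rw [hg, div_eq_inv_mul]
  -- reality of num
  have hM1 : (B * S⁻¹)ᴴ = B * S⁻¹ := by
    rw [hB_def]
    simp only [Matrix.conjTranspose_mul, Matrix.conjTranspose_nonsing_inv,
      Matrix.conjTranspose_conjTranspose, hSinv.isHermitian.eq, Matrix.mul_assoc]
  have hnum_conj : (starRingEnd ℂ) num = num := by
    have : (starRingEnd ℂ) num = star (star z ⬝ᵥ ((B * S⁻¹) *ᵥ z)) := rfl
    rw [this, star_dotProduct, star_star, star_mulVec, hM1, ← dotProduct_mulVec, hnum_def]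
  have hnum_im : num.im = 0 := Complex.conj_eq_iff_im.mp hnum_conj
  have hg_im : g.im = 0 := by
    rw [hg]
    simp [Complex.mul_im, Complex.inv_im, Complex.inv_re, Complex.add_im, Complex.add_re,
      Complex.one_im, Complex.one_re, hc_im, hnum_im]
  -- η equals g
  have hsq : Shalf * Shalf = S := by
    have hU : (star hS.posSemidef.1.eigenvectorUnitary : Matrix (Fin N) (Fin N) ℂ) *
        (hS.posSemidef.1.eigenvectorUnitary : Matrix (Fin N) (Fin N) ℂ) = 1 :=
      Unitary.coe_star_mul_self _
    have hD : diagonal ((↑) ∘ Real.sqrt ∘ hS.posSemidef.1.eigenvalues) *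
        diagonal ((↑) ∘ Real.sqrt ∘ hS.posSemidef.1.eigenvalues) =
        diagonal (RCLike.ofReal ∘ hS.posSemidef.1.eigenvalues : Fin N → ℂ) := by
      rw [diagonal_mul_diagonal]
      congr 1
      funext i
      simp only [Function.comp]
      rw [← Complex.ofReal_mul, Real.mul_self_sqrt (hS.posSemidef.eigenvalues_nonneg i)]
      rfl
    conv_rhs => rw [hS.posSemidef.1.spectral_theorem, Unitary.conjStarAlgAut_apply]
    calc Shalf * Shalf = (hS.posSemidef.1.eigenvectorUnitary : Matrix (Fin N) (Fin N) ℂ) *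
          diagonal ((↑) ∘ Real.sqrt ∘ hS.posSemidef.1.eigenvalues) *
          ((star hS.posSemidef.1.eigenvectorUnitary : Matrix (Fin N) (Fin N) ℂ) *
          (hS.posSemidef.1.eigenvectorUnitary : Matrix (Fin N) (Fin N) ℂ)) *
          diagonal ((↑) ∘ Real.sqrt ∘ hS.posSemidef.1.eigenvalues) *
          (star hS.posSemidef.1.eigenvectorUnitary : Matrix (Fin N) (Fin N) ℂ) := by
          simp only [Shalf, Matrix.mul_assoc]
      _ = _ := by
          rw [hU, Matrix.mul_one, Matrix.mul_assoc _ (diagonal _) (diagonal _), hD]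
  have hherm : Shalfᴴ = Shalf := by
    simp only [Shalf, Matrix.conjTranspose_mul, Matrix.star_eq_conjTranspose,
      Matrix.conjTranspose_conjTranspose, diagonal_conjTranspose, Matrix.mul_assoc]
    congr 3
    funext i
    simp
  have hSinv_eq : S⁻¹ = Shalf⁻¹ * Shalf⁻¹ := by rw [← hsq, Matrix.mul_inv_rev]
  have hhalfinvherm : (Shalf⁻¹)ᴴ = Shalf⁻¹ := by
    rw [Matrix.conjTranspose_nonsing_inv, hherm]
  have hA1t : A1ᴴ = Aᴴ * Shalf⁻¹ := by
    show (Shalf⁻¹ * A)ᴴ = Aᴴ * Shalf⁻¹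
    rw [Matrix.conjTranspose_mul, hhalfinvherm]
  have hA1A1 : A1ᴴ * A1 = Aᴴ * S⁻¹ * A := by
    rw [hA1t]
    show Aᴴ * Shalf⁻¹ * (Shalf⁻¹ * A) = Aᴴ * S⁻¹ * A
    rw [hSinv_eq, Matrix.mul_assoc, Matrix.mul_assoc, Matrix.mul_assoc]
  have hproj : Shalf⁻¹ * proj A1 * Shalf⁻¹ = B * S⁻¹ := by
    have : proj A1 = A1 * (A1ᴴ * A1)⁻¹ * A1ᴴ := rfl
    rw [this, hA1A1, hA1t, hB_def, hSinv_eq]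
    show Shalf⁻¹ * (Shalf⁻¹ * A * (Aᴴ * (Shalf⁻¹ * Shalf⁻¹) * A)⁻¹ * (Aᴴ * Shalf⁻¹)) * Shalf⁻¹ = _
    simp only [Matrix.mul_assoc]
  have hz1dot : ∀ w : Fin N → ℂ, star z1 ⬝ᵥ w = star z ⬝ᵥ (Shalf⁻¹ *ᵥ w) := by
    intro w
    show star (Shalf⁻¹ *ᵥ z) ⬝ᵥ w = _
    rw [star_mulVec, hhalfinvherm, ← dotProduct_mulVec]
  have hc1 : star z1 ⬝ᵥ z1 = c := by
    rw [hz1dot, hc_def]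
    show star z ⬝ᵥ (Shalf⁻¹ *ᵥ (Shalf⁻¹ *ᵥ z)) = _
    rw [mulVec_mulVec, ← hSinv_eq]
  have hnum1 : star z1 ⬝ᵥ (proj A1 *ᵥ z1) = num := by
    rw [hz1dot, hnum_def]
    show star z ⬝ᵥ (Shalf⁻¹ *ᵥ (proj A1 *ᵥ (Shalf⁻¹ *ᵥ z))) = _
    rw [mulVec_mulVec, mulVec_mulVec, hproj]
  have hη : η = g := by
    show (star z1 ⬝ᵥ (proj A1 *ᵥ z1)) / (1 + star z1 ⬝ᵥ z1) = g
    rw [hnum1, hc1, hgoal2]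
  refine ⟨hS0, hgoal2, hg_im, fun Kc => ?_⟩
  have hgre : ((g.re : ℝ) : ℂ) = g := by
    exact Complex.ext (by simp) (by simp [hg_im])
  rw [hη]
  push_cast
  rw [hgre]
end
end

section
/- Let S ∈ ℂ^{N×N} be Hermitian positive definite, z ∈ ℂ^N, and A ∈ ℂ^{N×r} of full column rank. Set S₀ = S + z z†, z₁ = S^{-1/2}z, and A₁ = S^{-1/2}A. Then A† S₀⁻¹ A is invertible and z† S₀⁻¹ A (A† S₀⁻¹ A)⁻¹ A† S₀⁻¹ z = [ z₁† P_{A₁} z₁ ] / [ (1 + z₁† z₁)(1 + z₁† P_{A₁}^⊥ z₁) ]; that is, the Rao statistic for adaptive vector-subspace detection of a point-like target admits the closed form η_rao = (1/(1 + z₁† z₁)) · z₁† P_{A₁} z₁ / (1 + z₁† P_{A₁}^⊥ z₁). -/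
open Matrix
open scoped ComplexOrder

noncomputable section

section RaoAux

variable {m n p : Type*} [Fintype m] [Fintype n] [Fintype p]

omit [Fintype m] [Fintype p] in
lemma mul_vecMulVec' (M : Matrix m n ℂ) (a : n → ℂ) (b : p → ℂ) :
    M * vecMulVec a b = vecMulVec (M *ᵥ a) b := by
  ext i j
  simp only [Matrix.mul_apply, vecMulVec_apply, mulVec, dotProduct, Finset.sum_mul]
  exact Finset.sum_congr rfl fun k _ => by ring

omit [Fintype m] [Fintype p] in
lemma vecMulVec_mul' (a : m → ℂ) (b : n → ℂ) (M : Matrix n p ℂ) :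
    vecMulVec a b * M = vecMulVec a (b ᵥ* M) := by
  ext i j
  simp only [Matrix.mul_apply, vecMulVec_apply, vecMul, dotProduct, Finset.mul_sum]
  exact Finset.sum_congr rfl fun k _ => by ring

omit [Fintype m] in
lemma vecMulVec_mulVec' (a : m → ℂ) (b : n → ℂ) (v : n → ℂ) :
    vecMulVec a b *ᵥ v = (b ⬝ᵥ v) • a := by
  ext i
  simp only [mulVec, vecMulVec_apply, dotProduct, Pi.smul_apply, smul_eq_mul, Finset.sum_mul]
  exact Finset.sum_congr rfl fun k _ => by ring

omit [Fintype n] in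
lemma vecMul_vecMulVec' (v : m → ℂ) (a : m → ℂ) (b : n → ℂ) :
    v ᵥ* vecMulVec a b = (v ⬝ᵥ a) • b := by
  ext j
  simp only [vecMul, vecMulVec_apply, dotProduct, Pi.smul_apply, smul_eq_mul, Finset.sum_mul]
  exact Finset.sum_congr rfl fun k _ => by ring

omit [Fintype m] [Fintype p] in
lemma vecMulVec_mul_vecMulVec' (a : m → ℂ) (b c : n → ℂ) (d : p → ℂ) :
    vecMulVec a b * vecMulVec c d = (b ⬝ᵥ c) • vecMulVec a d := by
  ext i j
  simp only [Matrix.mul_apply, vecMulVec_apply, Matrix.smul_apply, smul_eq_mul, dotProduct,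
    Finset.sum_mul]
  exact Finset.sum_congr rfl fun k _ => by ring

omit [Fintype n] in
lemma vecMul_smulMat (v : m → ℂ) (a : ℂ) (M : Matrix m n ℂ) :
    v ᵥ* (a • M) = a • (v ᵥ* M) := by
  ext j
  simp only [vecMul, dotProduct, Matrix.smul_apply, Pi.smul_apply, smul_eq_mul, Finset.mul_sum]
  exact Finset.sum_congr rfl fun k _ => by ring

end RaoAux

/-- Eq. (Rao vector subspace final) of the paper: with `S₀ = S + z zᴴ`, `z₁ = S^{-1/2} z`,
`A₁ = S^{-1/2} A`, the Rao statistic admits the closed form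
`zᴴ S₀⁻¹ A (Aᴴ S₀⁻¹ A)⁻¹ Aᴴ S₀⁻¹ z = z₁ᴴ P_{A₁} z₁ / [(1 + z₁ᴴ z₁)(1 + z₁ᴴ P_{A₁}^⊥ z₁)]`. -/
theorem rao_closed_form_pointlike
    (N r : ℕ) (hN : 0 < N) (hr : 0 < r)
    (S : Matrix (Fin N) (Fin N) ℂ) (hS : S.PosDef)
    (z : Fin N → ℂ)
    (A : Matrix (Fin N) (Fin r) ℂ) (hA : A.rank = r) :
    let S0 : Matrix (Fin N) (Fin N) ℂ := S + vecMulVec z (star z)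
    let Shalf : Matrix (Fin N) (Fin N) ℂ := hS.posSemidef.1.eigenvectorUnitary.1 *
      diagonal ((↑) ∘ (fun i => √(hS.posSemidef.1.eigenvalues i))) *
      (star hS.posSemidef.1.eigenvectorUnitary : Matrix (Fin N) (Fin N) ℂ)
    let z1 : Fin N → ℂ := Shalf⁻¹ *ᵥ z
    let A1 : Matrix (Fin N) (Fin r) ℂ := Shalf⁻¹ * A
    IsUnit (Aᴴ * S0⁻¹ * A) ∧
      star z ⬝ᵥ ((S0⁻¹ * A * (Aᴴ * S0⁻¹ * A)⁻¹ * Aᴴ * S0⁻¹) *ᵥ z) =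
        (star z1 ⬝ᵥ (proj A1 *ᵥ z1)) /
          ((1 + star z1 ⬝ᵥ z1) * (1 + star z1 ⬝ᵥ (projPerp A1 *ᵥ z1))) := by
  intro S0 Shalf z1 A1
  classical
  have hS0def : S0 = S + vecMulVec z (star z) := rfl
  have hz1 : z1 = Shalf⁻¹ *ᵥ z := rfl
  have hA1 : A1 = Shalf⁻¹ * A := rfl
  have hHboth : Shalf.IsHermitian ∧ Shalf * Shalf = S := by
    constructor
    · have hD : (diagonal ((↑) ∘ (fun i => √(hS.posSemidef.1.eigenvalues i))) :
          Matrix (Fin N) (Fin N) ℂ).IsHermitian := by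
        rw [isHermitian_diagonal_iff]; intro i; simp [IsSelfAdjoint, Complex.conj_ofReal]
      have := isHermitian_mul_mul_conjTranspose (hS.posSemidef.1.eigenvectorUnitary.1) hD
      simpa [Shalf, star_eq_conjTranspose] using this
    · have hU := Unitary.coe_star_mul_self hS.posSemidef.1.eigenvectorUnitary
      conv_rhs => rw [hS.posSemidef.1.spectral_theorem]
      simp only [Shalf, Unitary.conjStarAlgAut_apply]
      have hd : (diagonal ((↑) ∘ (fun i => √(hS.posSemidef.1.eigenvalues i))) :
          Matrix (Fin N) (Fin N) ℂ) *
          diagonal ((↑) ∘ (fun i => √(hS.posSemidef.1.eigenvalues i))) =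
          diagonal (RCLike.ofReal ∘ hS.posSemidef.1.eigenvalues) := by
        rw [diagonal_mul_diagonal]; congr 1; ext i
        simp only [Function.comp_apply, ← Complex.ofReal_mul]
        rw [Real.mul_self_sqrt (hS.posSemidef.eigenvalues_nonneg i)]; rfl
      calc _ = (hS.posSemidef.1.eigenvectorUnitary.1) *
        diagonal ((↑) ∘ (fun i => √(hS.posSemidef.1.eigenvalues i))) *
        ((star hS.posSemidef.1.eigenvectorUnitary : Matrix (Fin N) (Fin N) ℂ) *
          hS.posSemidef.1.eigenvectorUnitary.1) *
        diagonal ((↑) ∘ (fun i => √(hS.posSemidef.1.eigenvalues i))) *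
        (star hS.posSemidef.1.eigenvectorUnitary : Matrix (Fin N) (Fin N) ℂ) := by simp only [Matrix.mul_assoc]
      _ = _ := by rw [hU, Matrix.mul_one, Matrix.mul_assoc _ (diagonal _) (diagonal _), hd]
  have hH : Shalf.IsHermitian := hHboth.1
  have hHH : Shalf * Shalf = S := hHboth.2
  clear_value S0 Shalf z1 A1
  -- facts about Shalf
  have hdetS : S.det ≠ 0 := hS.det_pos.ne'
  have hdetH : IsUnit Shalf.det := by
    refine isUnit_iff_ne_zero.2 fun h => hdetS ?_
    rw [← hHH, det_mul, h, mul_zero]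
  have hHinv : Shalf⁻¹ * Shalf = 1 := nonsing_inv_mul _ hdetH
  have hHinv' : Shalf * Shalf⁻¹ = 1 := mul_nonsing_inv _ hdetH
  have hHinvHerm : (Shalf⁻¹).IsHermitian := hH.inv
  -- scalars
  set c : ℂ := star z1 ⬝ᵥ z1 with hc_def
  have hc0 : 0 ≤ c := dotProduct_star_self_nonneg z1
  clear_value c
  have h1c : (1 : ℂ) + c ≠ 0 := (add_pos_of_pos_of_nonneg one_pos hc0).ne'
  set γ : ℂ := (1 + c)⁻¹ with hγ_def
  have hγm : γ * (1 + c) = 1 := inv_mul_cancel₀ h1c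
  clear_value γ
  have hγ1 : (1 : ℂ) - γ - γ * c = 0 := by linear_combination -hγm
  -- G = A1ᴴ A1 is positive definite
  have hdetHinv : IsUnit (Shalf⁻¹).det := isUnit_nonsing_inv_det _ hdetH
  have hrankA1 : A1.rank = r := by
    rw [hA1, rank_mul_eq_right_of_isUnit_det _ _ hdetHinv, hA]
  have hA1inj : ∀ x : Fin r → ℂ, x ≠ 0 → A1 *ᵥ x ≠ 0 := by
    have hker : LinearMap.ker A1.mulVecLin = ⊥ := by
      have h1 := LinearMap.finrank_range_add_finrank_ker A1.mulVecLin
      rw [Module.finrank_fin_fun] at h1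
      have h2 : Module.finrank ℂ (LinearMap.range A1.mulVecLin) = r := hrankA1
      rw [h2] at h1
      have h3 : Module.finrank ℂ (LinearMap.ker A1.mulVecLin) = 0 := by omega
      exact Submodule.finrank_eq_zero.mp h3
    intro x hx h
    exact hx (LinearMap.ker_eq_bot.mp hker (by simpa [mulVecLin_apply] using h))
  set G : Matrix (Fin r) (Fin r) ℂ := A1ᴴ * A1 with hG_def
  have hGpd : G.PosDef := by
    rw [hG_def]
    refine PosDef.of_dotProduct_mulVec_pos (isHermitian_conjTranspose_mul_self A1) fun x hx => ?_
    rw [← mulVec_mulVec, dotProduct_mulVec, vecMul_conjTranspose, star_star]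
    exact dotProduct_star_self_pos_iff.mpr (hA1inj x hx)
  clear_value G
  have hGdet : IsUnit G.det := (isUnit_iff_isUnit_det _).1 hGpd.isUnit
  have hGG : G * G⁻¹ = 1 := mul_nonsing_inv _ hGdet
  have hGinvHerm : (G⁻¹).IsHermitian := hGpd.isHermitian.inv
  set u : Fin r → ℂ := A1ᴴ *ᵥ z1 with hu_def
  clear_value u
  set p : ℂ := star u ⬝ᵥ (G⁻¹ *ᵥ u) with hp_def
  have hp0 : 0 ≤ p := hGpd.inv.posSemidef.dotProduct_mulVec_nonneg u
  clear_value p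
  -- transfer facts
  have hszA : star z1 ᵥ* A1 = star u := by
    rw [hu_def, star_mulVec, conjTranspose_conjTranspose]
  have hsu : star u ᵥ* G⁻¹ = star (G⁻¹ *ᵥ u) := by
    rw [star_mulVec, hGinvHerm.eq]
  have hwp : (star u ᵥ* G⁻¹) ⬝ᵥ u = p := by
    rw [hp_def, dotProduct_mulVec]
  have hq2 : star (G⁻¹ *ᵥ u) ⬝ᵥ u = p := by rw [← hsu, hwp]
  have hzq : star z1 ⬝ᵥ (A1 *ᵥ (G⁻¹ *ᵥ u)) = p := by
    rw [dotProduct_mulVec, hszA, ← hp_def]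
  have hqz : star (A1 *ᵥ (G⁻¹ *ᵥ u)) ⬝ᵥ z1 = p := by
    rw [star_mulVec, ← dotProduct_mulVec, ← hu_def, hq2]
  have hqq : star (A1 *ᵥ (G⁻¹ *ᵥ u)) ⬝ᵥ (A1 *ᵥ (G⁻¹ *ᵥ u)) = p := by
    rw [star_mulVec, ← dotProduct_mulVec, mulVec_mulVec, ← hG_def, mulVec_mulVec, hGG,
      one_mulVec, hq2]
  have hcp0 : 0 ≤ c - p := by
    have key : star (z1 - A1 *ᵥ (G⁻¹ *ᵥ u)) ⬝ᵥ (z1 - A1 *ᵥ (G⁻¹ *ᵥ u)) = c - p := by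
      rw [star_sub, sub_dotProduct, dotProduct_sub, dotProduct_sub, hzq, hqq, hqz, ← hc_def]
      ring
    rw [← key]
    exact dotProduct_star_self_nonneg _
  have h1cp : (1 : ℂ) + c - p ≠ 0 := by
    have h : (0:ℂ) < 1 + (c - p) := add_pos_of_pos_of_nonneg one_pos hcp0
    intro hcon; apply h.ne'; rw [← hcon]; ring
  have h1cp' : (1 : ℂ) + (c - p) ≠ 0 := by
    intro hcon; apply h1cp; rw [← hcon]; ring
  set β : ℂ := (1 + c - p)⁻¹ with hβ_def
  have hβm : β * (1 + c - p) = 1 := inv_mul_cancel₀ h1cp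
  clear_value β
  have hcoef : β - γ - γ * (β * p) = 0 := by
    linear_combination (-β) * hγm + γ * hβm
  -- the rank-one update of the identity
  set W : Matrix (Fin N) (Fin N) ℂ := vecMulVec z1 (star z1) with hW_def
  clear_value W
  have hWW : W * W = c • W := by
    rw [hW_def, vecMulVec_mul_vecMulVec', ← hc_def]
  set Tinv : Matrix (Fin N) (Fin N) ℂ := 1 - γ • W with hTinv_def
  clear_value Tinv
  have hTTinv : (1 + W) * Tinv = 1 := by
    have h3 : γ • W + (γ * c) • W = W := by
      rw [← add_smul]
      have h4 : γ + γ * c = 1 := by linear_combination hγm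
      rw [h4, one_smul]
    rw [hTinv_def, mul_sub, mul_one, add_mul, one_mul, mul_smul_comm, hWW, smul_smul, h3]
    exact add_sub_cancel_right 1 W
  have hT : (1 + W)⁻¹ = Tinv := inv_eq_right_inv hTTinv
  -- decomposition of S0
  have hHz1 : Shalf *ᵥ z1 = z := by rw [hz1, mulVec_mulVec, hHinv', one_mulVec]
  have hdecomp : S0 = Shalf * (1 + W) * Shalf := by
    have h2 : star z1 ᵥ* Shalf = star z := by
      conv_lhs => rw [← hH.eq]
      rw [← star_mulVec, hHz1]
    rw [hS0def, mul_add, mul_one, add_mul, hHH, hW_def, mul_vecMulVec', hHz1, vecMulVec_mul', h2]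
  have hS0inv : S0⁻¹ = Shalf⁻¹ * Tinv * Shalf⁻¹ := by
    rw [hdecomp, Matrix.mul_inv_rev, Matrix.mul_inv_rev, hT, Matrix.mul_assoc]
  -- Aᴴ S0⁻¹ A
  have hAH : Aᴴ * Shalf⁻¹ = A1ᴴ := by
    rw [hA1, conjTranspose_mul, hHinvHerm.eq]
  set V : Matrix (Fin r) (Fin r) ℂ := vecMulVec u (star u) with hV_def
  clear_value V
  have hAHS0A : Aᴴ * S0⁻¹ * A = G - γ • V := by
    have e1 : Aᴴ * S0⁻¹ * A = A1ᴴ * Tinv * A1 := by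
      rw [hS0inv, show A1ᴴ = Aᴴ * Shalf⁻¹ from hAH.symm, hA1]
      simp only [Matrix.mul_assoc]
    have e2 : A1ᴴ * W * A1 = V := by
      rw [hW_def, mul_vecMulVec', ← hu_def, vecMulVec_mul', hszA, hV_def]
    rw [e1, hTinv_def, Matrix.mul_sub, Matrix.mul_one, Matrix.sub_mul, Matrix.mul_smul,
      Matrix.smul_mul, ← hG_def, e2]
  -- right inverse of G - γ • V
  set K : Matrix (Fin r) (Fin r) ℂ := vecMulVec (G⁻¹ *ᵥ u) (star u ᵥ* G⁻¹) with hK_def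
  clear_value K
  set Minv : Matrix (Fin r) (Fin r) ℂ := G⁻¹ + β • K with hMinv_def
  clear_value Minv
  have hGK : G * K = vecMulVec u (star u ᵥ* G⁻¹) := by
    rw [hK_def, mul_vecMulVec', mulVec_mulVec, hGG, one_mulVec]
  have hVG : V * G⁻¹ = vecMulVec u (star u ᵥ* G⁻¹) := by
    rw [hV_def, vecMulVec_mul']
  have hVK : V * K = p • vecMulVec u (star u ᵥ* G⁻¹) := by
    rw [hV_def, hK_def, vecMulVec_mul_vecMulVec', ← hp_def]
  have hMMinv : (G - γ • V) * Minv = 1 := by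
    rw [hMinv_def, mul_add, sub_mul, sub_mul, hGG, smul_mul_assoc, hVG, mul_smul_comm, hGK,
      smul_mul_assoc, mul_smul_comm, hVK, smul_smul, smul_smul]
    match_scalars
    · ring
    · linear_combination hcoef
  have hMinvEq : (Aᴴ * S0⁻¹ * A)⁻¹ = Minv := by
    rw [hAHS0A]; exact inv_eq_right_inv hMMinv
  constructor
  · rw [hAHS0A]
    letI := invertibleOfRightInverse _ _ hMMinv
    exact isUnit_of_invertible _
  -- the statistic
  have hprojv : proj A1 *ᵥ z1 = A1 *ᵥ (G⁻¹ *ᵥ u) := by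
    simp only [proj]
    rw [← hG_def, ← mulVec_mulVec, ← mulVec_mulVec, ← hu_def]
  have hRHSp : star z1 ⬝ᵥ (proj A1 *ᵥ z1) = p := by rw [hprojv, hzq]
  have hRHSperp : star z1 ⬝ᵥ (projPerp A1 *ᵥ z1) = c - p := by
    simp only [projPerp]
    rw [sub_mulVec, one_mulVec, dotProduct_sub, hprojv, hzq, ← hc_def]
  rw [hMinvEq, ← mulVec_mulVec, ← mulVec_mulVec, ← mulVec_mulVec, ← mulVec_mulVec,
    hRHSp, hRHSperp]
  have hWz : W *ᵥ z1 = c • z1 := by rw [hW_def, vecMulVec_mulVec', ← hc_def]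
  have hTz : Tinv *ᵥ z1 = γ • z1 := by
    rw [hTinv_def, sub_mulVec, one_mulVec, smul_mulVec, hWz]
    match_scalars
    linear_combination hγ1
  have hS0z : S0⁻¹ *ᵥ z = γ • (Shalf⁻¹ *ᵥ z1) := by
    rw [hS0inv, ← mulVec_mulVec, ← mulVec_mulVec, ← hz1, hTz, mulVec_smul]
  have hAz : Aᴴ *ᵥ (S0⁻¹ *ᵥ z) = γ • u := by
    rw [hS0z, mulVec_smul, mulVec_mulVec, hAH, ← hu_def]
  have hMu : Minv *ᵥ u = (1 + β * p) • (G⁻¹ *ᵥ u) := by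
    rw [hMinv_def, add_mulVec, smul_mulVec, hK_def, vecMulVec_mulVec', hwp]
    match_scalars
    ring
  have hA1Gu : Shalf⁻¹ *ᵥ (A *ᵥ (G⁻¹ *ᵥ u)) = A1 *ᵥ (G⁻¹ *ᵥ u) := by
    rw [mulVec_mulVec, ← hA1]
  have hszH : star z ᵥ* Shalf⁻¹ = star z1 := by
    rw [hz1, star_mulVec, hHinvHerm.eq]
  have hz1T : star z1 ᵥ* Tinv = γ • star z1 := by
    rw [hTinv_def, vecMul_sub, vecMul_one, vecMul_smulMat, hW_def, vecMul_vecMulVec', ← hc_def]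
    match_scalars
    linear_combination hγ1
  have hfinal : star z ⬝ᵥ (S0⁻¹ *ᵥ (A *ᵥ (G⁻¹ *ᵥ u))) = γ * p := by
    rw [hS0inv, ← mulVec_mulVec, ← mulVec_mulVec, hA1Gu, dotProduct_mulVec, hszH,
      dotProduct_mulVec, hz1T, smul_dotProduct, hzq, smul_eq_mul]
  rw [hAz, mulVec_smul, hMu, mulVec_smul, mulVec_smul, mulVec_smul, mulVec_smul,
    dotProduct_smul, dotProduct_smul, hfinal, smul_eq_mul, smul_eq_mul]
  have hden : ((1:ℂ) + c) * (1 + (c - p)) ≠ 0 := mul_ne_zero h1c h1cp'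
  rw [eq_div_iff hden]
  linear_combination (γ * p * (1 + β * p) * (1 + c - p) + p) * hγm + γ * p ^ 2 * hβm
end
end

section
/- Let S ∈ ℂ^{N×N} be Hermitian positive definite, Z_e ∈ ℂ^{N×M}, and a ∈ ℂ^N. Set S₀ = S + Z_e Z_e†. Then S₀ is Hermitian positive definite, I_M + Z_e† S⁻¹ Z_e is invertible, and Z_e† S₀⁻¹ a = (I_M + Z_e† S⁻¹ Z_e)⁻¹ (Z_e† S⁻¹ a). Consequently, for a ≠ 0 the Gradient statistic K·Re{ (Z_e† S⁻¹ a)† (Z_e† S₀⁻¹ a) } / (a† S⁻¹ a) for a range-spread target equals K·(Z_e† S⁻¹ a)† (I_M + Z_e† S⁻¹ Z_e)⁻¹ (Z_e† S⁻¹ a) / (a† S⁻¹ a), i.e., K times the GLR quantity η′; hence the Gradient test is statistically equivalent to the GLRT for range-spread targets. -/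
open Matrix
open scoped ComplexOrder

noncomputable section

/-- Woodbury-based step of Sec. IV-D of the paper: with `S₀ = S + Z_e Z_eᴴ`,
`Z_eᴴ S₀⁻¹ a = (I + Z_eᴴ S⁻¹ Z_e)⁻¹ (Z_eᴴ S⁻¹ a)`; consequently, for `a ≠ 0`, the Gradient
statistic for a range-spread target equals `K` times the GLR quantity `η′`, i.e., the Gradient
test is statistically equivalent to the GLRT for range-spread targets. -/
theorem gradient_equals_glr_range_spread
    (N M : ℕ) (hN : 0 < N) (hM : 0 < M)
    (S : Matrix (Fin N) (Fin N) ℂ) (hS : S.PosDef)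
    (Ze : Matrix (Fin N) (Fin M) ℂ) (a : Fin N → ℂ) :
    let S0 : Matrix (Fin N) (Fin N) ℂ := S + Ze * Zeᴴ
    let D0 : Matrix (Fin M) (Fin M) ℂ := 1 + Zeᴴ * S⁻¹ * Ze
    let u : Fin M → ℂ := Zeᴴ *ᵥ (S⁻¹ *ᵥ a)
    S0.PosDef ∧ IsUnit D0 ∧
      Zeᴴ *ᵥ (S0⁻¹ *ᵥ a) = D0⁻¹ *ᵥ u ∧
      (a ≠ 0 → ∀ Kc : ℝ,
        (Kc : ℂ) * (((star u ⬝ᵥ (Zeᴴ *ᵥ (S0⁻¹ *ᵥ a))).re : ℂ)) / (star a ⬝ᵥ (S⁻¹ *ᵥ a)) =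
          (Kc : ℂ) * (star u ⬝ᵥ (D0⁻¹ *ᵥ u)) / (star a ⬝ᵥ (S⁻¹ *ᵥ a))) := by
  intro S0 D0 u
  have hSd : IsUnit S.det := (Matrix.isUnit_iff_isUnit_det S).mp hS.isUnit
  -- S0 is PosDef
  have hS0 : S0.PosDef := hS.add_posSemidef (posSemidef_self_mul_conjTranspose Ze)
  have hS0d : IsUnit S0.det := (Matrix.isUnit_iff_isUnit_det S0).mp hS0.isUnit
  -- D0 is PosDef hence a unit
  have hZ : (Zeᴴ * S⁻¹ * Ze).PosSemidef := by
    simpa using PosSemidef.mul_mul_conjTranspose_same hS.inv.posSemidef Zeᴴ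
  have hD0 : D0.PosDef := (Matrix.PosDef.add_posSemidef Matrix.PosDef.one hZ)
  have hD0d : IsUnit D0.det := (Matrix.isUnit_iff_isUnit_det D0).mp hD0.isUnit
  -- the Woodbury identity at the matrix level
  have key : D0 * (Zeᴴ * S0⁻¹) = Zeᴴ * S⁻¹ := by
    have h1 : Zeᴴ * S⁻¹ * S0 = D0 * Zeᴴ := by
      show Zeᴴ * S⁻¹ * (S + Ze * Zeᴴ) = (1 + Zeᴴ * S⁻¹ * Ze) * Zeᴴ
      rw [Matrix.mul_add, Matrix.add_mul, Matrix.one_mul,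
        Matrix.nonsing_inv_mul_cancel_right S Zeᴴ hSd, Matrix.mul_assoc (Zeᴴ * S⁻¹) Ze Zeᴴ]
    calc D0 * (Zeᴴ * S0⁻¹) = (Zeᴴ * S⁻¹ * S0) * S0⁻¹ := by
          rw [h1, Matrix.mul_assoc]
      _ = Zeᴴ * S⁻¹ := Matrix.mul_nonsing_inv_cancel_right S0 _ hS0d
  have key2 : Zeᴴ * S0⁻¹ = D0⁻¹ * (Zeᴴ * S⁻¹) := by
    rw [← key, ← Matrix.mul_assoc, Matrix.nonsing_inv_mul D0 hD0d, Matrix.one_mul]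
  have hvec : Zeᴴ *ᵥ (S0⁻¹ *ᵥ a) = D0⁻¹ *ᵥ u := by
    show Zeᴴ *ᵥ (S0⁻¹ *ᵥ a) = D0⁻¹ *ᵥ (Zeᴴ *ᵥ (S⁻¹ *ᵥ a))
    rw [mulVec_mulVec, mulVec_mulVec, mulVec_mulVec, key2, Matrix.mul_assoc]
  refine ⟨hS0, hD0.isUnit, hvec, fun _ Kc => ?_⟩
  rw [hvec]
  -- the quadratic form star u ⬝ᵥ D0⁻¹ *ᵥ u is a nonnegative real
  have hq : 0 ≤ star u ⬝ᵥ (D0⁻¹ *ᵥ u) := hD0.inv.posSemidef.dotProduct_mulVec_nonneg u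
  have : ((star u ⬝ᵥ (D0⁻¹ *ᵥ u)).re : ℂ) = star u ⬝ᵥ (D0⁻¹ *ᵥ u) := by
    obtain ⟨hre, him⟩ := Complex.nonneg_iff.mp hq
    exact Complex.ext rfl (by simpa using him)
  rw [this]
end
end

section
/- Let S ∈ ℂ^{N×N} be Hermitian positive definite, Z_e ∈ ℂ^{N×M}, and a ∈ ℂ^N with a ≠ 0. Set c = a† S⁻¹ a (a positive real), u = Z_e† S⁻¹ a ∈ ℂ^M, D₀ = I_M + Z_e† S⁻¹ Z_e, η′ = u† D₀⁻¹ u / c, and D₁ = D₀ − c⁻¹ u u†. Then D₀ is Hermitian positive definite, 0 ≤ η′ < 1, D₁ is Hermitian positive definite, and c⁻¹ · Tr[ u u† D₁⁻¹ ] = η′ / (1 − η′). Hence the Lawley–Hotelling statistic t_lh = Tr[ Z_e† S⁻¹ a a† S⁻¹ Z_e D₁⁻¹ ] / (a† S⁻¹ a) for range-spread targets equals η′/(1 − η′) and is therefore statistically equivalent to the GLR for range-spread targets. -/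
open Matrix
open scoped ComplexOrder

noncomputable section

lemma myVecMulVec_mulVec {m n : Type*} [Fintype n] (u : m → ℂ) (v : n → ℂ) (x : n → ℂ) :
    vecMulVec u v *ᵥ x = (v ⬝ᵥ x) • u := by
  ext i
  simp only [mulVec, dotProduct, vecMulVec_apply, Pi.smul_apply, smul_eq_mul, Finset.sum_mul]
  exact Finset.sum_congr rfl fun j _ => by ring

lemma myTrace_vecMulVec_mul {m : Type*} [Fintype m] [DecidableEq m]
    (u : m → ℂ) (v : m → ℂ) (B : Matrix m m ℂ) :
    (vecMulVec u v * B).trace = v ⬝ᵥ (B *ᵥ u) := by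
  simp only [Matrix.trace, Matrix.diag, Matrix.mul_apply, vecMulVec_apply, dotProduct, mulVec,
    Finset.mul_sum]
  rw [Finset.sum_comm]
  exact Finset.sum_congr rfl fun j _ => Finset.sum_congr rfl fun i _ => by ring

lemma myMul_vecMulVec_mul {m n p : Type*} [Fintype n] (B : Matrix m n ℂ) (C : Matrix n p ℂ)
    (a : n → ℂ) (v : n → ℂ) :
    B * vecMulVec a v * C = vecMulVec (B *ᵥ a) (v ᵥ* C) := by
  ext i j
  simp only [Matrix.mul_apply, vecMulVec_apply, mulVec, vecMul, dotProduct, Finset.sum_mul,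
    Finset.mul_sum]
  exact Finset.sum_congr rfl fun k _ => Finset.sum_congr rfl fun l _ => by ring

/-- Final computation of Sec. IV-D (LH statistic) of the paper: `c = aᴴ S⁻¹ a` is a positive
real, `D₀ = I + Z_eᴴ S⁻¹ Z_e` is Hermitian positive definite, `0 ≤ η′ < 1`,
`D₁ = D₀ − c⁻¹ u uᴴ` is Hermitian positive definite, and
`c⁻¹ Tr[u uᴴ D₁⁻¹] = η′/(1 − η′)`; hence the Lawley–Hotelling statistic
`t_lh = Tr[Z_eᴴ S⁻¹ a aᴴ S⁻¹ Z_e D₁⁻¹]/(aᴴ S⁻¹ a)` equals `η′/(1 − η′)` and is statistically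
equivalent to the GLR for range-spread targets. -/
theorem lh_equals_glr_range_spread
    (N M : ℕ) (hN : 0 < N) (hM : 0 < M)
    (S : Matrix (Fin N) (Fin N) ℂ) (hS : S.PosDef)
    (Ze : Matrix (Fin N) (Fin M) ℂ) (a : Fin N → ℂ) (ha : a ≠ 0) :
    let c : ℂ := star a ⬝ᵥ (S⁻¹ *ᵥ a)
    let u : Fin M → ℂ := Zeᴴ *ᵥ (S⁻¹ *ᵥ a)
    let D0 : Matrix (Fin M) (Fin M) ℂ := 1 + Zeᴴ * S⁻¹ * Ze
    let η : ℂ := (star u ⬝ᵥ (D0⁻¹ *ᵥ u)) / c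
    let D1 : Matrix (Fin M) (Fin M) ℂ := D0 - c⁻¹ • vecMulVec u (star u)
    (0 < c.re ∧ c.im = 0) ∧
      D0.PosDef ∧
      (η.im = 0 ∧ 0 ≤ η.re ∧ η.re < 1) ∧
      D1.PosDef ∧
      c⁻¹ * (vecMulVec u (star u) * D1⁻¹).trace = η / (1 - η) ∧
      (Zeᴴ * S⁻¹ * vecMulVec a (star a) * S⁻¹ * Ze * D1⁻¹).trace / c = η / (1 - η) := by
  intro c u D0 η D1
  have hW : S⁻¹.PosDef := hS.inv
  have hWH : S⁻¹ᴴ = S⁻¹ := hW.isHermitian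
  have hcpos : (0:ℂ) < c := hW.dotProduct_mulVec_pos ha
  have hcre : 0 < c.re := by simpa using (Complex.lt_def.mp hcpos).1
  have hcim : c.im = 0 := by simpa using (Complex.lt_def.mp hcpos).2.symm
  have hcC : c = ((c.re : ℝ) : ℂ) := by
    apply Complex.ext <;> simp [hcim]
  have hc0 : c ≠ 0 := hcpos.ne'
  have hcstar : star c = c := by
    rw [hcC]; exact Complex.conj_ofReal _
  -- D0 posdef
  have hZWZ : (Zeᴴ * S⁻¹ * Ze).PosSemidef := hW.posSemidef.conjTranspose_mul_mul_same Ze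
  have hD0 : D0.PosDef := Matrix.PosDef.add_posSemidef Matrix.PosDef.one hZWZ
  -- relations for u
  have hu1 : (Zeᴴ * S⁻¹) *ᵥ a = u := (mulVec_mulVec a Zeᴴ S⁻¹).symm ▸ rfl
  have hu2 : star u = star a ᵥ* (S⁻¹ * Ze) := by
    show star (Zeᴴ *ᵥ (S⁻¹ *ᵥ a)) = _
    rw [star_mulVec, conjTranspose_conjTranspose, star_mulVec, hWH, vecMul_vecMul]
  -- the projected matrix P
  set A : Matrix (Fin N) (Fin N) ℂ := vecMulVec a (star a) with hAdef
  have hAH : Aᴴ = A := by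
    ext i j
    simp [hAdef, conjTranspose_apply, vecMulVec_apply, mul_comm]
  set P : Matrix (Fin N) (Fin N) ℂ := S⁻¹ - c⁻¹ • (S⁻¹ * A * S⁻¹) with hPdef
  have hPH : P.IsHermitian := by
    show Pᴴ = P
    rw [hPdef, conjTranspose_sub, conjTranspose_smul, conjTranspose_mul, conjTranspose_mul,
      hWH, hAH, star_inv₀, hcstar, Matrix.mul_assoc]
  have hP : P.PosSemidef := by
    refine PosSemidef.of_dotProduct_mulVec_nonneg hPH fun x => ?_
    set β : ℂ := star a ⬝ᵥ (S⁻¹ *ᵥ x) with hβdef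
    have hβ' : star x ⬝ᵥ (S⁻¹ *ᵥ a) = star β := by
      rw [star_dotProduct]
      congr 1
      rw [star_mulVec, hWH, ← dotProduct_mulVec, ← hβdef]
    set y : Fin N → ℂ := x - (β / c) • a with hydef
    have key : star x ⬝ᵥ (P *ᵥ x) = star y ⬝ᵥ (S⁻¹ *ᵥ y) := by
      rw [hydef, hPdef]
      rw [sub_mulVec, smul_mulVec, ← mulVec_mulVec, ← mulVec_mulVec,
        myVecMulVec_mulVec, ← hβdef, mulVec_smul]
      rw [mulVec_sub, mulVec_smul, star_sub, star_smul, sub_dotProduct, dotProduct_sub,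
        dotProduct_sub, smul_dotProduct, dotProduct_smul, dotProduct_smul, dotProduct_smul,
        hβ']
      rw [star_div₀, hcstar]
      have hcdef : star a ⬝ᵥ (S⁻¹ *ᵥ a) = c := rfl
      simp only [dotProduct_sub, dotProduct_smul, smul_eq_mul, hβ', hcdef, ← hβdef]
      field_simp
      ring
    rw [key]
    exact hW.posSemidef.dotProduct_mulVec_nonneg y
  -- D1 = 1 + Zeᴴ P Ze
  have hWAW : Zeᴴ * (S⁻¹ * A * S⁻¹) * Ze = vecMulVec u (star u) := by
    have h := myMul_vecMulVec_mul (Zeᴴ * S⁻¹) (S⁻¹ * Ze) a (star a)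
    rw [hu1, ← hu2] at h
    rw [← h, hAdef]
    simp only [Matrix.mul_assoc]
  have hD1eq : D1 = 1 + Zeᴴ * P * Ze := by
    show D0 - c⁻¹ • vecMulVec u (star u) = _
    rw [hPdef, Matrix.mul_sub, Matrix.sub_mul, Matrix.mul_smul, Matrix.smul_mul, hWAW]
    show (1 : Matrix (Fin M) (Fin M) ℂ) + Zeᴴ * S⁻¹ * Ze - c⁻¹ • vecMulVec u (star u) = _
    rw [add_sub_assoc]
  have hD1 : D1.PosDef := by
    rw [hD1eq]
    exact Matrix.PosDef.add_posSemidef Matrix.PosDef.one (hP.conjTranspose_mul_mul_same Ze)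
  -- q facts
  set q : ℂ := star u ⬝ᵥ (D0⁻¹ *ᵥ u) with hqdef
  have hqnn : (0:ℂ) ≤ q := hD0.inv.posSemidef.dotProduct_mulVec_nonneg u
  have hqre : 0 ≤ q.re := by simpa using (Complex.le_def.mp hqnn).1
  have hqim : q.im = 0 := by simpa using (Complex.le_def.mp hqnn).2.symm
  have hqC : q = ((q.re : ℝ) : ℂ) := by apply Complex.ext <;> simp [hqim]
  have hqstar : star q = q := by rw [hqC]; exact Complex.conj_ofReal _
  have hηdef : η = q / c := rfl
  have hηC : η = ((q.re / c.re : ℝ) : ℂ) := by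
    rw [hηdef, Complex.ofReal_div, ← hqC, ← hcC]
  -- x and D0 x = u
  set x : Fin M → ℂ := D0⁻¹ *ᵥ u with hxdef
  have hD0det : IsUnit D0.det := hD0.det_pos.ne'.isUnit
  have hD0x : D0 *ᵥ x = u := by
    rw [hxdef, mulVec_mulVec, Matrix.mul_nonsing_inv _ hD0det, one_mulVec]
  have hux : star u ⬝ᵥ x = q := rfl
  have hxu : star x ⬝ᵥ u = q := by
    rw [star_dotProduct, show star u ⬝ᵥ x = q from rfl, hqstar]
  have hD1x : D1 *ᵥ x = u - (c⁻¹ * q) • u := by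
    show (D0 - c⁻¹ • vecMulVec u (star u)) *ᵥ x = _
    rw [sub_mulVec, smul_mulVec, myVecMulVec_mulVec, hux, hD0x, smul_smul]
  -- strict inequality q.re < c.re
  have hqc : q.re < c.re := by
    by_cases hu : u = 0
    · have : q = 0 := by rw [hqdef, hu]; simp
      rw [this]; simpa using hcre
    · have hx0 : x ≠ 0 := by
        intro h
        exact hu (by rw [← hD0x, h, mulVec_zero])
      have hpos := hD1.dotProduct_mulVec_pos hx0
      rw [hD1x, dotProduct_sub, dotProduct_smul, hxu, smul_eq_mul] at hpos
      have : q - c⁻¹ * q * q = (((q.re - (c.re)⁻¹ * q.re * q.re : ℝ)) : ℂ) := by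
        conv_lhs => rw [hqC, hcC]
        push_cast; ring
      rw [this] at hpos
      have hre : 0 < q.re - (c.re)⁻¹ * q.re * q.re := Complex.zero_lt_real.mp hpos
      rcases hqre.eq_or_lt with h0 | hq0
      · linarith [hre, hcre, h0.symm ▸ hre]
      · have key2 : q.re * q.re < q.re * c.re := by
          have h3 := mul_lt_mul_of_pos_right
            (show c.re⁻¹ * q.re * q.re < q.re by linarith) hcre
          calc q.re * q.re = c.re⁻¹ * q.re * q.re * c.re := by field_simp
            _ < q.re * c.re := h3
        exact (mul_lt_mul_iff_right₀ hq0).mp key2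
  have hcq : c - q ≠ 0 := by
    rw [hcC, hqC, ← Complex.ofReal_sub]
    exact_mod_cast Complex.ofReal_ne_zero.mpr (by linarith)
  -- invert D1 against the rank-one update
  have hD1det : IsUnit D1.det := hD1.det_pos.ne'.isUnit
  have hD1w : D1 *ᵥ ((c / (c - q)) • x) = u := by
    rw [mulVec_smul, hD1x, smul_sub, smul_smul, ← sub_smul]
    have : c / (c - q) - c / (c - q) * (c⁻¹ * q) = 1 := by
      field_simp
    rw [this, one_smul]
  have hw : D1⁻¹ *ᵥ u = (c / (c - q)) • x := by
    rw [← hD1w, mulVec_mulVec, Matrix.nonsing_inv_mul _ hD1det, one_mulVec]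
  have htr : (vecMulVec u (star u) * D1⁻¹).trace = c / (c - q) * q := by
    rw [myTrace_vecMulVec_mul, hw, dotProduct_smul, hux, smul_eq_mul]
  have h1η : 1 - η ≠ 0 := by
    rw [hηdef, sub_ne_zero]
    intro h
    apply hcq
    have := h.symm
    rw [div_eq_iff hc0] at this
    rw [sub_eq_zero]
    simpa using this.symm
  have hmain : c⁻¹ * (vecMulVec u (star u) * D1⁻¹).trace = η / (1 - η) := by
    rw [htr, hηdef]
    field_simp
  refine ⟨⟨hcre, hcim⟩, hD0, ⟨by rw [hηC]; simp, by rw [hηC]; simpa using div_nonneg hqre hcre.le,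
    by rw [hηC]; simpa using (div_lt_one hcre).mpr hqc⟩, hD1, hmain, ?_⟩
  have hZZ : Zeᴴ * S⁻¹ * vecMulVec a (star a) * S⁻¹ * Ze = vecMulVec u (star u) := by
    rw [← hWAW, hAdef]; simp only [Matrix.mul_assoc]
  rw [hZZ, div_eq_inv_mul, hmain]
end
end
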